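/- arXiv:1303.1350 — 8 statements merged into one kernel-verified Lean document; each statement's English description precedes it below -/
import Mathlib

section
/- If F(z) = z + Σ_{n≥2} A_n z^n is analytic in the unit disk and Σ_{n≥2} |n A_n - e^{iφ}(n-1) A_{n-1}| ≤ 1 for some real φ, then Re((1 - e^{iφ} z) F'(z)) > 0 for all z in the unit disk. -/
open Complex Metric

/-- If `F(z) = z + ∑_{n≥2} A n z^n` is analytic on the unit disk and
`∑_{n≥2} |n A_n - e^{iφ}(n-1) A_{n-1}| ≤ 1`, then `Re((1 - e^{iφ} z) F'(z)) > 0` on the disk. -/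
theorem stmt_0 (F : ℂ → ℂ) (A : ℕ → ℂ) (φ : ℝ)
    (hA0 : A 0 = 0) (hA1 : A 1 = 1)
    (hF : ∀ z ∈ ball (0 : ℂ) 1, HasSum (fun n : ℕ => A n * z ^ n) (F z))
    (hsum : Summable (fun n : ℕ =>
      ‖((n : ℂ) + 2) * A (n + 2) - Complex.exp (φ * Complex.I) * ((n : ℂ) + 1) * A (n + 1)‖))
    (hcoef : (∑' n : ℕ,
      ‖((n : ℂ) + 2) * A (n + 2) - Complex.exp (φ * Complex.I) * ((n : ℂ) + 1) * A (n + 1)‖) ≤ 1) :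
    ∀ z ∈ ball (0 : ℂ) 1,
      0 < ((1 - Complex.exp (φ * Complex.I) * z) * deriv F z).re := by
  intro z hz
  have hz1 : ‖z‖ < 1 := by simpa [dist_eq_norm] using hz
  set e : ℂ := Complex.exp (φ * Complex.I) with he_def
  have he : ‖e‖ = 1 := by
    simp [he_def, Complex.norm_exp]
  set c : ℕ → ℂ := fun n => ((n : ℂ) + 2) * A (n + 2) - e * ((n : ℂ) + 1) * A (n + 1)
    with hc_def
  have hsumc : Summable fun n => ‖c n‖ := hsum
  have hcoefc : (∑' n, ‖c n‖) ≤ 1 := hcoef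
  -- coefficient bound
  have hpartial : ∀ n : ℕ, ‖((n : ℂ) + 1) * A (n + 1)‖ ≤ 1 + ∑ k ∈ Finset.range n, ‖c k‖ := by
    intro n
    induction n with
    | zero => simp [hA1]
    | succ n ih =>
      have key : ((↑(n + 1) : ℂ) + 1) * A (n + 1 + 1) = c n + e * (((n : ℂ) + 1) * A (n + 1)) := by
        simp only [hc_def]; push_cast; ring
      calc ‖((↑(n + 1) : ℂ) + 1) * A (n + 1 + 1)‖
          ≤ ‖c n‖ + ‖e * (((n : ℂ) + 1) * A (n + 1))‖ := by rw [key]; exact norm_add_le _ _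
        _ = ‖c n‖ + ‖((n : ℂ) + 1) * A (n + 1)‖ := by rw [norm_mul, he, one_mul]
        _ ≤ ‖c n‖ + (1 + ∑ k ∈ Finset.range n, ‖c k‖) := by linarith
        _ = 1 + ∑ k ∈ Finset.range (n + 1), ‖c k‖ := by
            rw [Finset.sum_range_succ]; ring
  have hbound : ∀ n : ℕ, ‖((n : ℂ) + 1) * A (n + 1)‖ ≤ 2 := by
    intro n
    refine (hpartial n).trans ?_
    have h1 : (∑ k ∈ Finset.range n, ‖c k‖) ≤ ∑' k, ‖c k‖ :=
      hsumc.sum_le_tsum _ (fun _ _ => norm_nonneg _)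
    linarith
  have hboundn : ∀ n : ℕ, ‖(n : ℂ) * A n‖ ≤ 2 := by
    intro n
    cases n with
    | zero => simp
    | succ n => simpa [Nat.cast_succ] using hbound n
  -- setup for differentiation
  set r : ℝ := (1 + ‖z‖) / 2 with hr_def
  have hr0 : 0 < r := by positivity
  have hr1 : r < 1 := by rw [hr_def]; linarith
  have hzr : ‖z‖ < r := by rw [hr_def]; linarith
  set g : ℕ → ℂ → ℂ := fun n w => A n * w ^ n with hg_def
  set g' : ℕ → ℂ → ℂ := fun n w => (n : ℂ) * A n * w ^ (n - 1) with hg'_def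
  set u : ℕ → ℝ := fun n => 2 * r ^ (n - 1) with hu_def
  have hu : Summable u := by
    apply Summable.mul_left
    rw [← summable_nat_add_iff 1]
    simpa using summable_geometric_of_lt_one hr0.le hr1
  have hderiv : ∀ (n : ℕ) (w : ℂ), HasDerivAt (g n) (g' n w) w := by
    intro n w
    have := (hasDerivAt_pow n w).const_mul (A n)
    simpa [hg_def, hg'_def, mul_assoc, mul_comm, mul_left_comm] using this
  have hg'bound : ∀ (n : ℕ) (w : ℂ), w ∈ ball (0 : ℂ) r → ‖g' n w‖ ≤ u n := by
    intro n w hw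
    have hwr : ‖w‖ ≤ r := by
      have := mem_ball_iff_norm.mp hw; simpa using this.le
    have h1 : ‖g' n w‖ = ‖(n : ℂ) * A n‖ * ‖w‖ ^ (n - 1) := by
      simp [hg'_def, norm_mul, norm_pow]
    rw [h1, hu_def]
    have h2 : ‖w‖ ^ (n - 1) ≤ r ^ (n - 1) := pow_le_pow_left₀ (norm_nonneg _) hwr _
    exact mul_le_mul (hboundn n) h2 (pow_nonneg (norm_nonneg w) _) (by norm_num)
  have hg0 : Summable fun n => g n (0 : ℂ) := by
    have : (fun n => g n (0 : ℂ)) = fun _ => (0 : ℂ) := by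
      funext n; cases n <;> simp [hg_def, hA0]
    rw [this]; exact summable_zero
  have hD : HasDerivAt (fun w => ∑' n, g n w) (∑' n, g' n z) z :=
    hasDerivAt_tsum_of_isPreconnected hu isOpen_ball (convex_ball _ _).isPreconnected
      (fun n y _ => hderiv n y) hg'bound (by simpa [mem_ball] using hr0)
      hg0 (by simpa [mem_ball, dist_eq_norm] using hzr)
  set D : ℂ := ∑' n, g' n z with hD_def
  have hFeq : F =ᶠ[nhds z] fun w => ∑' n, g n w := by
    filter_upwards [isOpen_ball.mem_nhds hz] with w hw
    exact ((hF w hw).tsum_eq).symm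
  have hderivF : deriv F z = D := by
    rw [Filter.EventuallyEq.deriv_eq hFeq]
    exact hD.deriv
  -- HasSum manipulations
  have hsummg' : Summable fun n => g' n z := by
    refine Summable.of_norm_bounded hu fun n => ?_
    exact hg'bound n z (by simpa [mem_ball, dist_eq_norm] using hzr)
  have hSD : HasSum (fun n => g' n z) D := hsummg'.hasSum
  have hS1 : HasSum (fun n => g' (n + 1) z) D := by
    have := (hasSum_nat_add_iff' 1).mpr hSD
    simpa [hg'_def] using this
  have hS1' : HasSum (fun n : ℕ => ((n : ℂ) + 1) * A (n + 1) * z ^ n) D := by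
    refine hS1.congr_fun fun n => ?_
    simp [hg'_def]
  -- split first term
  have hS2 : HasSum (fun n : ℕ => ((n : ℂ) + 2) * A (n + 2) * z ^ (n + 1)) (D - 1) := by
    have := (hasSum_nat_add_iff' 1).mpr hS1'
    have h0 : (∑ i ∈ Finset.range 1, ((i : ℂ) + 1) * A (i + 1) * z ^ i) = 1 := by
      simp [hA1]
    rw [h0] at this
    refine this.congr_fun fun n => ?_
    push_cast; ring
  have hS3 : HasSum (fun n : ℕ => e * ((n : ℂ) + 1) * A (n + 1) * z ^ (n + 1)) (e * z * D) := by
    have := hS1'.mul_left (e * z)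
    refine this.congr_fun fun n => ?_
    ring
  have hT : HasSum (fun n : ℕ => c n * z ^ (n + 1)) (D - 1 - e * z * D) := by
    have := hS2.sub hS3
    refine this.congr_fun fun n => ?_
    simp only [hc_def]; ring
  set T : ℂ := D - 1 - e * z * D with hT_def
  -- norm bound on T
  have hsummT : Summable fun n => ‖c n * z ^ (n + 1)‖ := by
    refine hsumc.of_nonneg_of_le (fun _ => norm_nonneg _) fun n => ?_
    rw [norm_mul, norm_pow]
    calc ‖c n‖ * ‖z‖ ^ (n + 1) ≤ ‖c n‖ * 1 := by
          refine mul_le_mul_of_nonneg_left ?_ (norm_nonneg _)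
          exact pow_le_one₀ (norm_nonneg _) hz1.le
      _ = ‖c n‖ := mul_one _
  have hTnorm : ‖T‖ ≤ ‖z‖ := by
    calc ‖T‖ = ‖∑' n, c n * z ^ (n + 1)‖ := by rw [hT.tsum_eq]
      _ ≤ ∑' n, ‖c n * z ^ (n + 1)‖ := norm_tsum_le_tsum_norm hsummT
      _ ≤ ∑' n, ‖c n‖ * ‖z‖ := by
          refine hsummT.tsum_le_tsum (fun n => ?_) (hsumc.mul_right _)
          rw [norm_mul, norm_pow, pow_succ]
          have h1 : ‖z‖ ^ n ≤ 1 := pow_le_one₀ (norm_nonneg _) hz1.le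
          have h2 : ‖z‖ ^ n * ‖z‖ ≤ ‖z‖ := by nlinarith [norm_nonneg z]
          exact mul_le_mul_of_nonneg_left h2 (norm_nonneg _)
      _ = (∑' n, ‖c n‖) * ‖z‖ := by rw [tsum_mul_right]
      _ ≤ 1 * ‖z‖ := mul_le_mul_of_nonneg_right hcoefc (norm_nonneg _)
      _ = ‖z‖ := one_mul _
  have hfinal : (1 - e * z) * deriv F z = 1 + T := by
    rw [hderivF, hT_def]; ring
  rw [hfinal]
  have hre : |T.re| ≤ ‖T‖ := Complex.abs_re_le_norm T
  have : (1 + T).re = 1 + T.re := by simp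
  rw [this]
  have : -T.re ≤ |T.re| := neg_le_abs _
  linarith
end

section
/- If F(z) = z + Σ_{n≥2} A_n z^n is analytic in the unit disk and Σ_{n≥2} |n A_n - e^{iφ}(n-1) A_{n-1}| ≤ 1 for some real φ, then |(1 - e^{iφ} z) F'(z) - 1| < 1 for all z in the unit disk. -/
open Complex Metric

/-- If `F(z) = z + ∑_{n≥2} A n z^n` is analytic on the unit disk and
`∑_{n≥2} |n A_n - e^{iφ}(n-1) A_{n-1}| ≤ 1`, then `Re((1 - e^{iφ} z) F'(z)) > 0` on the disk. -/
theorem stmt_1 (F : ℂ → ℂ) (A : ℕ → ℂ) (φ : ℝ)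
    (hA0 : A 0 = 0) (hA1 : A 1 = 1)
    (hF : ∀ z ∈ ball (0 : ℂ) 1, HasSum (fun n : ℕ => A n * z ^ n) (F z))
    (hsum : Summable (fun n : ℕ =>
      ‖((n : ℂ) + 2) * A (n + 2) - Complex.exp (φ * Complex.I) * ((n : ℂ) + 1) * A (n + 1)‖))
    (hcoef : (∑' n : ℕ,
      ‖((n : ℂ) + 2) * A (n + 2) - Complex.exp (φ * Complex.I) * ((n : ℂ) + 1) * A (n + 1)‖) ≤ 1) :
    ∀ z ∈ ball (0 : ℂ) 1,
      ‖(1 - Complex.exp (φ * Complex.I) * z) * deriv F z - 1‖ < 1 := by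
  intro z hz
  set e : ℂ := Complex.exp (φ * Complex.I) with he
  have hz1 : ‖z‖ < 1 := by simpa using hz
  set r : ℝ := (‖z‖ + 1) / 2 with hr
  set ρ : ℝ := (r + 1) / 2 with hρ
  have hz0 : (0:ℝ) ≤ ‖z‖ := norm_nonneg z
  have hr0 : 0 < r := by positivity
  have hzr : ‖z‖ < r := by rw [hr]; linarith
  have hrρ : r < ρ := by rw [hρ]; linarith [hr0, hz1]
  have hρ0 : 0 < ρ := lt_trans hr0 hrρ
  have hρ1 : ρ < 1 := by rw [hρ, hr]; linarith
  -- bound the coefficients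
  have hρball : (ρ : ℂ) ∈ ball (0 : ℂ) 1 := by
    simp [Complex.norm_real, abs_of_pos hρ0, hρ1]
  have hsumρ : Summable (fun n : ℕ => A n * (ρ : ℂ) ^ n) := (hF _ hρball).summable
  have htend : Filter.Tendsto (fun n : ℕ => ‖A n‖ * ρ ^ n) Filter.atTop (nhds 0) := by
    have := hsumρ.tendsto_atTop_zero.norm
    simpa [norm_mul, norm_pow, Complex.norm_real, abs_of_pos hρ0] using this
  obtain ⟨C, hC⟩ := htend.bddAbove_range
  have hC' : ∀ n, ‖A n‖ * ρ ^ n ≤ C := fun n => hC (Set.mem_range_self n)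
  have hC0 : 0 ≤ C := le_trans (by positivity) (hC' 0)
  -- the summable bound for the derivative series
  set u : ℕ → ℝ := fun n => (C / r) * ((n : ℝ) ^ 1 * (r / ρ) ^ n) with hu_def
  have hu : Summable u := by
    apply Summable.mul_left
    apply summable_pow_mul_geometric_of_norm_lt_one
    rw [Real.norm_eq_abs, abs_of_pos (by positivity)]
    exact (div_lt_one hρ0).2 hrρ
  -- bound for term derivatives
  have hbound : ∀ (n : ℕ) (w : ℂ), w ∈ ball (0:ℂ) r →
      ‖A n * ((n : ℂ) * w ^ (n - 1))‖ ≤ u n := by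
    intro n w hw
    have hwr : ‖w‖ ≤ r := le_of_lt (by simpa using hw)
    match n with
    | 0 => simp [hu_def]
    | (m + 1) =>
      have hAm : ‖A (m + 1)‖ ≤ C / ρ ^ (m + 1) := by
        rw [le_div_iff₀ (by positivity)]
        exact hC' (m + 1)
      have hwm : ‖w‖ ^ m ≤ r ^ m := pow_le_pow_left₀ (norm_nonneg w) hwr m
      have : ‖A (m + 1) * ((↑(m + 1) : ℂ) * w ^ m)‖
          = ‖A (m + 1)‖ * ((m + 1 : ℝ) * ‖w‖ ^ m) := by
        rw [norm_mul, norm_mul, norm_pow, Complex.norm_natCast]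
        push_cast
        ring
      rw [show (m + 1) - 1 = m from rfl, this]
      calc ‖A (m + 1)‖ * ((m + 1 : ℝ) * ‖w‖ ^ m)
          ≤ (C / ρ ^ (m + 1)) * ((m + 1 : ℝ) * r ^ m) := by
            gcongr
        _ = u (m + 1) := by
            rw [hu_def]
            simp only [pow_one, div_pow]
            push_cast
            field_simp
            ring
  -- term-by-term differentiation on the ball of radius r
  have hderivsum : HasDerivAt (fun w : ℂ => ∑' n : ℕ, A n * w ^ n)
      (∑' n : ℕ, A n * ((n : ℂ) * z ^ (n - 1))) z := by
    apply hasDerivAt_tsum_of_isPreconnected hu isOpen_ball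
      (convex_ball (0:ℂ) r).isPreconnected
      (g := fun n w => A n * w ^ n) (g' := fun n w => A n * ((n : ℂ) * w ^ (n - 1)))
      (fun n y _ => (hasDerivAt_pow n y).const_mul (A n))
      (fun n y hy => hbound n y hy)
      (mem_ball_self hr0)
      (by simpa using (hF 0 (by simp)).summable)
      (mem_ball_zero_iff.2 hzr)
  have hFt : F =ᶠ[nhds z] fun w => ∑' n : ℕ, A n * w ^ n := by
    filter_upwards [isOpen_ball.mem_nhds hz] with w hw
    exact ((hF w hw).tsum_eq).symm
  have hDF : HasDerivAt F (∑' n : ℕ, A n * ((n : ℂ) * z ^ (n - 1))) z :=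
    hderivsum.congr_of_eventuallyEq hFt
  set D : ℂ := ∑' n : ℕ, A n * ((n : ℂ) * z ^ (n - 1)) with hD_def
  have hderiv : deriv F z = D := hDF.deriv
  -- HasSum for D
  have hDsummable : Summable (fun n : ℕ => A n * ((n : ℂ) * z ^ (n - 1))) :=
    Summable.of_norm_bounded hu (fun n => hbound n z (mem_ball_zero_iff.2 hzr))
  have hD : HasSum (fun n : ℕ => A n * ((n : ℂ) * z ^ (n - 1))) D := hDsummable.hasSum
  -- shift the index by one
  have hD1 : HasSum (fun n : ℕ => A (n + 1) * (((n : ℂ) + 1) * z ^ n)) D := by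
    have := (hasSum_nat_add_iff' (f := fun n : ℕ => A n * ((n : ℂ) * z ^ (n - 1))) 1).2 hD
    simp only [Finset.range_one, Finset.sum_singleton, Nat.cast_zero, zero_mul, mul_zero,
      sub_zero] at this
    convert this using 2 with n
    case e'_3 => rfl
    push_cast
    simp
  -- shift again (removing the constant term 1 = A 1)
  have hD2 : HasSum (fun n : ℕ => A (n + 2) * (((n : ℂ) + 2) * z ^ (n + 1))) (D - 1) := by
    have := (hasSum_nat_add_iff' (f := fun n : ℕ => A (n + 1) * (((n : ℂ) + 1) * z ^ n)) 1).2 hD1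
    simp only [Finset.range_one, Finset.sum_singleton, Nat.cast_zero, zero_add, pow_zero,
      mul_one, hA1, one_mul] at this
    convert this using 2 with n
    case e'_3 => rfl
    push_cast
    ring
  have hEZ : HasSum (fun n : ℕ => (e * z) * (A (n + 1) * (((n : ℂ) + 1) * z ^ n))) (e * z * D) :=
    hD1.mul_left (e * z)
  have hT : HasSum
      (fun n : ℕ => (((n : ℂ) + 2) * A (n + 2) - e * ((n : ℂ) + 1) * A (n + 1)) * z ^ (n + 1))
      ((D - 1) - e * z * D) := by
    have := hD2.sub hEZ
    convert this using 2 with n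
    case e'_3 => rfl
    ring
  -- norm estimate
  have hb : ∀ n : ℕ,
      ‖(((n : ℂ) + 2) * A (n + 2) - e * ((n : ℂ) + 1) * A (n + 1)) * z ^ (n + 1)‖
        ≤ ‖((n : ℂ) + 2) * A (n + 2) - e * ((n : ℂ) + 1) * A (n + 1)‖ * ‖z‖ := by
    intro n
    rw [norm_mul, norm_pow]
    gcongr
    calc ‖z‖ ^ (n + 1) ≤ ‖z‖ ^ 1 := pow_le_pow_of_le_one hz0 hz1.le (by omega)
      _ = ‖z‖ := pow_one _
  have hnorm : ‖(D - 1) - e * z * D‖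
      ≤ (∑' n : ℕ, ‖((n : ℂ) + 2) * A (n + 2) - e * ((n : ℂ) + 1) * A (n + 1)‖) * ‖z‖ := by
    rw [← hT.tsum_eq]
    exact tsum_of_norm_bounded (hsum.hasSum.mul_right ‖z‖) hb
  have key : ‖(D - 1) - e * z * D‖ < 1 := by
    calc ‖(D - 1) - e * z * D‖
        ≤ (∑' n : ℕ, ‖((n : ℂ) + 2) * A (n + 2) - e * ((n : ℂ) + 1) * A (n + 1)‖) * ‖z‖ := hnorm
      _ ≤ 1 * ‖z‖ := by
          exact mul_le_mul_of_nonneg_right hcoef hz0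
      _ = ‖z‖ := one_mul _
      _ < 1 := hz1
  rw [hderiv]
  convert key using 2
  ring
end

section
/- Suppose a_n, b_n are complex sequences (with a_1 = 1, b_0 = 0, |b_1| < 1) satisfying Σ_{n≥2} |n a_n - e^{iφ}(n-1) a_{n-1}| + Σ_{n≥1} |n b_n - e^{iφ}(n-1) b_{n-1}| ≤ 1 for some real φ. Then for every ε with |ε| = 1, the coefficients A_n = (a_n + ε b_n)/(1 + ε b_1) satisfy Σ_{n≥2} |n A_n - e^{iφ}(n-1) A_{n-1}| ≤ 1. -/
open Complex

/-- Coefficient transfer: if the harmonic coefficient condition holds for `a, b`, then for each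
unimodular `ε` the coefficients `A n = (a n + ε b n)/(1 + ε b 1)` satisfy the analytic condition. -/
theorem stmt_2 (a b : ℕ → ℂ) (φ : ℝ) (ε : ℂ)
    (ha1 : a 1 = 1) (hb0 : b 0 = 0) (hb1 : ‖b 1‖ < 1) (hε : ‖ε‖ = 1)
    (hsa : Summable (fun n : ℕ =>
      ‖((n : ℂ) + 2) * a (n + 2) - Complex.exp (φ * Complex.I) * ((n : ℂ) + 1) * a (n + 1)‖))
    (hsb : Summable (fun n : ℕ =>
      ‖((n : ℂ) + 1) * b (n + 1) - Complex.exp (φ * Complex.I) * (n : ℂ) * b n‖))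
    (hcoef : (∑' n : ℕ,
        ‖((n : ℂ) + 2) * a (n + 2) - Complex.exp (φ * Complex.I) * ((n : ℂ) + 1) * a (n + 1)‖)
      + (∑' n : ℕ,
        ‖((n : ℂ) + 1) * b (n + 1) - Complex.exp (φ * Complex.I) * (n : ℂ) * b n‖) ≤ 1) :
    Summable (fun n : ℕ =>
      ‖((n : ℂ) + 2) * ((a (n + 2) + ε * b (n + 2)) / (1 + ε * b 1))
        - Complex.exp (φ * Complex.I) * ((n : ℂ) + 1) * ((a (n + 1) + ε * b (n + 1)) / (1 + ε * b 1))‖)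
    ∧ (∑' n : ℕ,
      ‖((n : ℂ) + 2) * ((a (n + 2) + ε * b (n + 2)) / (1 + ε * b 1))
        - Complex.exp (φ * Complex.I) * ((n : ℂ) + 1) * ((a (n + 1) + ε * b (n + 1)) / (1 + ε * b 1))‖) ≤ 1 := by
  set e : ℂ := Complex.exp (φ * Complex.I) with he
  set c : ℂ := 1 + ε * b 1 with hc
  set u : ℕ → ℂ := fun n => ((n : ℂ) + 2) * a (n + 2) - e * ((n : ℂ) + 1) * a (n + 1) with hu
  set v : ℕ → ℂ := fun n => ((n : ℂ) + 1) * b (n + 1) - e * (n : ℂ) * b n with hv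
  have hεb : ‖ε * b 1‖ = ‖b 1‖ := by rw [norm_mul, hε, one_mul]
  have hclb : 1 - ‖b 1‖ ≤ ‖c‖ := by
    have h := norm_sub_norm_le (1 : ℂ) (-(ε * b 1))
    simp only [norm_one, norm_neg, sub_neg_eq_add] at h
    rw [hεb] at h
    exact h
  have hcpos : 0 < ‖c‖ := lt_of_lt_of_le (by linarith) hclb
  -- pointwise rewriting
  have key : ∀ n : ℕ,
      ((n : ℂ) + 2) * ((a (n + 2) + ε * b (n + 2)) / c)
        - e * ((n : ℂ) + 1) * ((a (n + 1) + ε * b (n + 1)) / c)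
      = (u n + ε * v (n + 1)) / c := by
    intro n
    simp only [hu, hv]
    push_cast
    ring
  have hnorm : ∀ n : ℕ,
      ‖((n : ℂ) + 2) * ((a (n + 2) + ε * b (n + 2)) / c)
        - e * ((n : ℂ) + 1) * ((a (n + 1) + ε * b (n + 1)) / c)‖
      ≤ (‖u n‖ + ‖v (n + 1)‖) / ‖c‖ := by
    intro n
    rw [key n, norm_div]
    gcongr
    calc ‖u n + ε * v (n + 1)‖ ≤ ‖u n‖ + ‖ε * v (n + 1)‖ := norm_add_le _ _
      _ = ‖u n‖ + ‖v (n + 1)‖ := by rw [norm_mul, hε, one_mul]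
  have hsb' : Summable (fun n : ℕ => ‖v (n + 1)‖) := by
    exact (summable_nat_add_iff 1).mpr hsb
  have hg : Summable (fun n : ℕ => (‖u n‖ + ‖v (n + 1)‖) / ‖c‖) :=
    (hsa.add hsb').div_const _
  have hf : Summable (fun n : ℕ =>
      ‖((n : ℂ) + 2) * ((a (n + 2) + ε * b (n + 2)) / c)
        - e * ((n : ℂ) + 1) * ((a (n + 1) + ε * b (n + 1)) / c)‖) :=
    Summable.of_nonneg_of_le (fun n => norm_nonneg _) hnorm hg
  refine ⟨hf, ?_⟩
  have hshift : (∑' n : ℕ, ‖v n‖) = ‖b 1‖ + ∑' n : ℕ, ‖v (n + 1)‖ := by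
    rw [Summable.tsum_eq_zero_add hsb]
    congr 1
    simp [hv, hb0]
  have htsum_le : (∑' n : ℕ,
      ‖((n : ℂ) + 2) * ((a (n + 2) + ε * b (n + 2)) / c)
        - e * ((n : ℂ) + 1) * ((a (n + 1) + ε * b (n + 1)) / c)‖)
      ≤ ∑' n : ℕ, (‖u n‖ + ‖v (n + 1)‖) / ‖c‖ := Summable.tsum_le_tsum hnorm hf hg
  have hgval : (∑' n : ℕ, (‖u n‖ + ‖v (n + 1)‖) / ‖c‖)
      = ((∑' n : ℕ, ‖u n‖) + ∑' n : ℕ, ‖v (n + 1)‖) / ‖c‖ := by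
    rw [tsum_div_const, Summable.tsum_add hsa hsb']
  have hnum : (∑' n : ℕ, ‖u n‖) + (∑' n : ℕ, ‖v (n + 1)‖) ≤ 1 - ‖b 1‖ := by
    have : (∑' n : ℕ, ‖u n‖) + (∑' n : ℕ, ‖v n‖) ≤ 1 := hcoef
    rw [hshift] at this
    linarith
  calc (∑' n : ℕ,
      ‖((n : ℂ) + 2) * ((a (n + 2) + ε * b (n + 2)) / c)
        - e * ((n : ℂ) + 1) * ((a (n + 1) + ε * b (n + 1)) / c)‖)
      ≤ ((∑' n : ℕ, ‖u n‖) + ∑' n : ℕ, ‖v (n + 1)‖) / ‖c‖ := by rw [← hgval]; exact htsum_le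
    _ ≤ 1 := by
        rw [div_le_one hcpos]
        linarith
end

section
/- Let {c_n}_{n≥0} be a convex null sequence with c_0 = 2 and define F(z) = z + Σ_{n≥2} (c_{n-1}/n) z^n. Then Re(F'(z)) > 0 for all z in the unit disk. -/
open Complex Metric Filter

noncomputable def Sg (n : ℕ) (z : ℂ) : ℂ := ∑ k ∈ Finset.range (n+1), z ^ k
noncomputable def sg (n : ℕ) (z : ℂ) : ℂ := ∑ k ∈ Finset.range (n+1), Sg k z

lemma Sg_diff (n : ℕ) : Differentiable ℂ (Sg n) := by
  unfold Sg
  exact Differentiable.fun_sum (fun k _ => differentiable_pow k)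

lemma sg_diff (n : ℕ) : Differentiable ℂ (sg n) := by
  unfold sg
  exact Differentiable.fun_sum (fun k _ => Sg_diff k)

lemma Sg_mul (n : ℕ) (z : ℂ) : (1 - z) * Sg n z = 1 - z ^ (n+1) := by
  have := geom_sum_mul z (n+1)
  unfold Sg
  linear_combination -this

lemma sg_eq (n : ℕ) (z : ℂ) :
    (1 - z)^2 * sg n z = ((n:ℂ)+1)*(1-z) - z*(1 - z^(n+1)) := by
  induction n with
  | zero => simp [sg, Sg]; ring
  | succ n ih =>
    have h1 : sg (n+1) z = sg n z + Sg (n+1) z := by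
      unfold sg; rw [Finset.sum_range_succ]
    have h2 := Sg_mul (n+1) z
    rw [h1]
    push_cast
    ring_nf
    ring_nf at ih h2
    linear_combination ih + (1-z) * h2

lemma Sg_conj (n : ℕ) {w : ℂ} (hw : w * (starRingEnd ℂ) w = 1) :
    Sg n w * (starRingEnd ℂ) (w^(n+1)) = (starRingEnd ℂ) (Sg (n+1) w - 1) := by
  have hw0 : w ≠ 0 := by
    intro h; rw [h] at hw; simp at hw
  have hpow : ∀ m : ℕ, w ^ m * (starRingEnd ℂ) (w ^ m) = 1 := by
    intro m; rw [map_pow, ← mul_pow, hw, one_pow]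
  apply mul_left_cancel₀ (pow_ne_zero (n+1) hw0)
  have h2 : Sg (n+1) w - 1 = ∑ k ∈ Finset.range (n+1), w^(k+1) := by
    unfold Sg; rw [Finset.sum_range_succ']; simp
  rw [h2, map_sum, Finset.mul_sum]
  have h3 : ∀ k ∈ Finset.range (n+1),
      w^(n+1) * (starRingEnd ℂ) (w^(k+1)) = w^(n-k) := by
    intro k hk
    rw [Finset.mem_range] at hk
    have : w^(n+1) = w^(n-k) * w^(k+1) := by
      rw [← pow_add]; congr 1; omega
    rw [this, mul_assoc, hpow, mul_one]
  rw [Finset.sum_congr rfl h3]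
  have h4 := Finset.sum_range_reflect (fun j => w ^ j) (n+1)
  calc w^(n+1) * (Sg n w * (starRingEnd ℂ) (w^(n+1)))
      = (w^(n+1) * (starRingEnd ℂ) (w^(n+1))) * Sg n w := by ring
    _ = Sg n w := by rw [hpow, one_mul]
    _ = ∑ k ∈ Finset.range (n+1), w ^ (n - k) := by
        unfold Sg; rw [← h4]; apply Finset.sum_congr rfl; intro k hk
        rw [Finset.mem_range] at hk
        have hnk : n + 1 - 1 - k = n - k := by omega
        rw [hnk]

lemma sg_boundary (n : ℕ) {w : ℂ} (hw : ‖w‖ = 1) :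
    ((n:ℝ)+1) + Complex.normSq (Sg n w) = 2 * (sg n w).re := by
  have hnsq : Complex.normSq w = 1 := by
    rw [Complex.normSq_eq_norm_sq, hw]; norm_num
  have hww : w * (starRingEnd ℂ) w = 1 := by
    rw [Complex.mul_conj, hnsq]; norm_num
  induction n with
  | zero => simp [Sg, sg]; norm_num
  | succ n ih =>
    have hS : Sg (n+1) w = Sg n w + w^(n+1) := by
      unfold Sg; rw [Finset.sum_range_succ]
    have hsg : sg (n+1) w = sg n w + Sg (n+1) w := by
      unfold sg; rw [Finset.sum_range_succ]
    have hnormSqPow : Complex.normSq (w^(n+1)) = 1 := by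
      rw [map_pow, hnsq, one_pow]
    have hre : (Sg n w * (starRingEnd ℂ) (w^(n+1))).re = (Sg (n+1) w).re - 1 := by
      rw [Sg_conj n hww, Complex.conj_re, Complex.sub_re, Complex.one_re]
    have hadd := Complex.normSq_add (Sg n w) (w^(n+1))
    rw [hS] at hre
    rw [hsg, hS, Complex.add_re, hadd, hnormSqPow, hre]
    push_cast
    linarith [ih]

lemma sg_hasDerivAt_zero (n : ℕ) : HasDerivAt (sg n) (n : ℂ) 0 := by
  have hterm : ∀ j : ℕ, ((j:ℂ) * 0^(j-1)) = if j = 1 then 1 else 0 := by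
    intro j
    match j with
    | 0 => simp
    | 1 => simp
    | (m+2) => simp [zero_pow]
  have hSg : ∀ k, HasDerivAt (Sg k) (if k = 0 then 0 else 1 : ℂ) 0 := by
    intro k
    have h1 : HasDerivAt (Sg k) (∑ j ∈ Finset.range (k+1), (j:ℂ) * 0^(j-1)) 0 := by
      apply HasDerivAt.fun_sum
      intro j _
      exact hasDerivAt_pow j 0
    have h2 : (∑ j ∈ Finset.range (k+1), (j:ℂ) * 0^(j-1)) = (if k = 0 then 0 else 1 : ℂ) := by
      rw [Finset.sum_congr rfl (fun j _ => hterm j), Finset.sum_ite_eq' (Finset.range (k+1)) 1 (fun _ => (1:ℂ))]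
      by_cases hk : k = 0 <;> simp [hk, Finset.mem_range]
    rwa [h2] at h1
  have h3 : HasDerivAt (sg n) (∑ k ∈ Finset.range (n+1), (if k = 0 then 0 else 1 : ℂ)) 0 := by
    apply HasDerivAt.fun_sum
    intro k _
    exact hSg k
  have h4 : (∑ k ∈ Finset.range (n+1), (if k = 0 then 0 else 1 : ℂ)) = (n : ℂ) := by
    rw [Finset.sum_range_succ']
    simp
  rwa [h4] at h3

lemma sg_lower_weak (n : ℕ) {z : ℂ} (hz : ‖z‖ < 1) : ((n:ℝ)+1)/2 ≤ (sg n z).re := by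
  set f : ℂ → ℂ := fun w => Complex.exp (-(sg n w)) with hf
  have hdiff : Differentiable ℂ f := ((sg_diff n).neg).cexp
  have hbound : ∀ w ∈ frontier (ball (0:ℂ) 1), ‖f w‖ ≤ Real.exp (-(((n:ℝ)+1)/2)) := by
    intro w hw
    rw [frontier_ball (0:ℂ) one_ne_zero] at hw
    have hw1 : ‖w‖ = 1 := by simpa using hw
    have hb := sg_boundary n hw1
    have hnsq := Complex.normSq_nonneg (Sg n w)
    have : ((n:ℝ)+1)/2 ≤ (sg n w).re := by linarith
    rw [hf]
    simp only [Complex.norm_exp, Complex.neg_re]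
    exact Real.exp_le_exp.2 (by linarith)
  have hcl : (z : ℂ) ∈ closure (ball (0:ℂ) 1) := subset_closure (by simpa using hz)
  have := Complex.norm_le_of_forall_mem_frontier_norm_le isBounded_ball
    hdiff.diffContOnCl hbound hcl
  rw [hf] at this
  simp only [Complex.norm_exp, Complex.neg_re] at this
  have := Real.exp_le_exp.1 this
  linarith

lemma sg_lower (n : ℕ) {z : ℂ} (hz : ‖z‖ < 1) : ((n:ℝ)+1)/2 < (sg n z).re := by
  rcases Nat.eq_zero_or_pos n with hn | hn
  · subst hn
    have : sg 0 z = 1 := by simp [sg, Sg]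
    rw [this]
    norm_num
  by_contra hcon
  have heq : (sg n z).re = ((n:ℝ)+1)/2 := le_antisymm (not_lt.1 hcon) (sg_lower_weak n hz)
  set f : ℂ → ℂ := fun w => Complex.exp (-(sg n w)) with hf
  have hdiff : Differentiable ℂ f := ((sg_diff n).neg).cexp
  have hzb : z ∈ ball (0:ℂ) 1 := by simpa using hz
  have hmax : IsMaxOn (norm ∘ f) (ball (0:ℂ) 1) z := by
    intro w hw
    have h1 : ((n:ℝ)+1)/2 ≤ (sg n w).re := sg_lower_weak n (by simpa using hw)
    simp only [Function.comp_apply, hf, Complex.norm_exp,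
      Complex.neg_re, Set.mem_setOf_eq, heq]
    exact Real.exp_le_exp.2 (by linarith)
  have hconst := Complex.eqOn_of_isPreconnected_of_isMaxOn_norm
    (convex_ball (0:ℂ) 1).isPreconnected isOpen_ball hdiff.differentiableOn hzb hmax
  -- deriv of f at 0 is 0
  have h0b : (0:ℂ) ∈ ball (0:ℂ) 1 := by simp
  have hev : f =ᶠ[nhds (0:ℂ)] (fun _ => f z) := by
    filter_upwards [isOpen_ball.mem_nhds h0b] with w hw
    exact hconst hw
  have hderiv0 : deriv f 0 = 0 := by
    rw [hev.deriv_eq]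
    exact deriv_const _ _
  have hdf : HasDerivAt f (Complex.exp (-(sg n 0)) * (-(n:ℂ))) 0 :=
    ((sg_hasDerivAt_zero n).neg).cexp
  rw [hdf.deriv] at hderiv0
  have : (n:ℂ) = 0 := by
    rcases mul_eq_zero.1 hderiv0 with h | h
    · exact absurd h (Complex.exp_ne_zero _)
    · simpa using h
  have : n = 0 := by exact_mod_cast this
  omega

set_option maxHeartbeats 1000000 in
/-- If `{c_n}` is a convex null sequence with `c₀ = 2` and
`F(z) = z + ∑_{n≥2} (c_{n-1}/n) z^n`, then `Re F'(z) > 0` on the unit disk. -/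
theorem stmt_4 (c : ℕ → ℝ) (F : ℂ → ℂ)
    (hnn : ∀ n, 0 ≤ c n)
    (hnull : Tendsto c atTop (nhds 0))
    (hconv : ∀ n, c (n + 1) - c (n + 2) ≤ c n - c (n + 1) ∧ 0 ≤ c (n + 1) - c (n + 2))
    (hc0 : c 0 = 2)
    (hF : ∀ z ∈ ball (0 : ℂ) 1,
      HasSum (fun n : ℕ => ((c (n + 1) : ℂ) / ((n : ℂ) + 2)) * z ^ (n + 2)) (F z - z)) :
    ∀ z ∈ ball (0 : ℂ) 1, 0 < (deriv F z).re := by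
  intro z hz
  have hz1 : ‖z‖ < 1 := by simpa using hz
  set b : ℕ → ℝ := fun n => c n - c (n+1) with hbdef
  set d : ℕ → ℝ := fun n => b n - b (n+1) with hddef
  have hb_anti : ∀ n, b (n+1) ≤ b n := fun n => (hconv n).1
  have hb_nonneg : ∀ n, 0 ≤ b n := by
    intro n
    cases n with
    | zero => exact le_trans (hconv 0).2 (hconv 0).1
    | succ m => exact (hconv m).2
  have hd_nonneg : ∀ n, 0 ≤ d n := fun n => sub_nonneg.2 (hb_anti n)
  have hc_le0 : ∀ n, c n ≤ c 0 := by
    intro n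
    induction n with
    | zero => exact le_refl _
    | succ m ih =>
      have := hb_nonneg m
      simp only [hbdef] at this
      linarith
  have hc_le : ∀ n, c n ≤ 2 := fun n => hc0 ▸ hc_le0 n
  have hcshift : Tendsto (fun n => c (n+1)) atTop (nhds 0) :=
    hnull.comp (Filter.tendsto_add_atTop_nat 1)
  have hb_tendsto : Tendsto b atTop (nhds 0) := by
    have := hnull.sub hcshift
    simpa using this
  have hbsum : HasSum b 2 := by
    rw [hasSum_iff_tendsto_nat_of_nonneg hb_nonneg]
    have hps : ∀ N, ∑ i ∈ Finset.range N, b i = c 0 - c N :=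
      fun N => Finset.sum_range_sub' c N
    have h2 : Tendsto (fun N => c 0 - c N) atTop (nhds 2) := by
      have := (tendsto_const_nhds (x := c 0) (f := atTop)).sub hnull
      simpa [hc0] using this
    exact h2.congr (fun N => (hps N).symm)
  have hpart : ∀ N, ∑ k ∈ Finset.range N, ((k:ℝ)+1) * d k
      = (∑ k ∈ Finset.range N, b k) - N * b N := by
    intro N
    induction N with
    | zero => simp
    | succ m ih =>
      rw [Finset.sum_range_succ, Finset.sum_range_succ, ih]
      simp only [hddef]
      push_cast
      ring
  have hAnn : ∀ k : ℕ, 0 ≤ ((k:ℝ)+1) * d k :=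
    fun k => mul_nonneg (by positivity) (hd_nonneg k)
  have hAbd : ∀ N, ∑ k ∈ Finset.range N, ((k:ℝ)+1) * d k ≤ 2 := by
    intro N
    rw [hpart N]
    have h1 : ∑ k ∈ Finset.range N, b k ≤ 2 :=
      sum_le_hasSum (Finset.range N) (fun i _ => hb_nonneg i) hbsum
    have h2 : 0 ≤ (N:ℝ) * b N := mul_nonneg (Nat.cast_nonneg N) (hb_nonneg N)
    linarith
  have hAsummable : Summable (fun k : ℕ => ((k:ℝ)+1) * d k) :=
    summable_of_sum_range_le hAnn hAbd
  set A := ∑' k : ℕ, ((k:ℝ)+1) * d k with hAdef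
  have hAhasSum : HasSum (fun k : ℕ => ((k:ℝ)+1)*d k) A := hAsummable.hasSum
  have hA_le : A ≤ 2 := Real.tsum_le_of_sum_range_le hAnn hAbd
  have hNb : Tendsto (fun N : ℕ => (N:ℝ) * b N) atTop (nhds (2 - A)) := by
    have h1 : Tendsto (fun N => ∑ k ∈ Finset.range N, b k) atTop (nhds 2) :=
      (hasSum_iff_tendsto_nat_of_nonneg hb_nonneg 2).1 hbsum
    have h2 : Tendsto (fun N => ∑ k ∈ Finset.range N, ((k:ℝ)+1)*d k) atTop (nhds A) :=
      (hasSum_iff_tendsto_nat_of_nonneg hAnn A).1 hAhasSum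
    have h3 := h1.sub h2
    apply h3.congr
    intro N
    rw [hpart N]
    ring
  have hA2 : A = 2 := by
    by_contra hne
    have hL : 0 < 2 - A := lt_of_le_of_ne (by linarith) (fun h => hne (by linarith))
    set L := 2 - A with hLdef
    have hev : ∀ᶠ N : ℕ in atTop, L/2 < (N:ℝ) * b N :=
      hNb.eventually (eventually_gt_nhds (by linarith))
    obtain ⟨n₀, hn₀⟩ := Filter.eventually_atTop.1 hev
    have hsum2 : Summable (fun n => b (n + (n₀+1))) :=
      (summable_nat_add_iff (n₀+1)).2 hbsum.summable
    have hcomp : Summable (fun n : ℕ => (L/2) * (((n + (n₀+1) : ℕ)):ℝ)⁻¹) := by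
      apply Summable.of_nonneg_of_le (fun n => by positivity) _ hsum2
      intro n
      have hN := hn₀ (n + (n₀+1)) (by omega)
      have hNpos : (0:ℝ) < ((n + (n₀+1):ℕ):ℝ) := by
        exact_mod_cast Nat.pos_of_ne_zero (by omega)
      calc (L/2) * (((n + (n₀+1) : ℕ)):ℝ)⁻¹ = (L/2) / (((n + (n₀+1) : ℕ)):ℝ) :=
            (div_eq_mul_inv _ _).symm
        _ ≤ b (n + (n₀+1)) := le_of_lt ((div_lt_iff₀ hNpos).2 (by rw [mul_comm]; exact hN))
    have hinv : Summable (fun n : ℕ => (L/2) * ((n:ℕ):ℝ)⁻¹) :=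
      (summable_nat_add_iff (n₀+1)).1 hcomp
    have : Summable (fun n : ℕ => ((n:ℕ):ℝ)⁻¹) := by
      have hL2 : L/2 ≠ 0 := by positivity
      have h2 := hinv.mul_left (L/2)⁻¹
      apply h2.congr
      intro n
      rw [← mul_assoc, inv_mul_cancel₀ hL2, one_mul]
    exact Real.not_summable_natCast_inv this
  have hdsum : HasSum d (b 0) := by
    rw [hasSum_iff_tendsto_nat_of_nonneg hd_nonneg]
    have hps : ∀ N, ∑ i ∈ Finset.range N, d i = b 0 - b N :=
      fun N => Finset.sum_range_sub' b N
    have h2 : Tendsto (fun N => b 0 - b N) atTop (nhds (b 0)) := by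
      have := (tendsto_const_nhds (x := b 0) (f := atTop)).sub hb_tendsto
      simpa using this
    exact h2.congr (fun N => (hps N).symm)
  -- a positive d
  have hdpos : ∃ m, 0 < d m := by
    by_contra hcon
    push_neg at hcon
    have hd0 : ∀ m, d m = 0 := fun m => le_antisymm (hcon m) (hd_nonneg m)
    have hbconst : ∀ m, b m = b 0 := by
      intro m
      induction m with
      | zero => rfl
      | succ k ih =>
        have := hd0 k
        simp only [hddef] at this
        linarith
    have hb00 : b 0 = 0 := by
      have h1 : Tendsto b atTop (nhds (b 0)) := by
        have : b = fun _ => b 0 := funext fun m => hbconst m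
        rw [this]
        exact tendsto_const_nhds
      exact tendsto_nhds_unique h1 hb_tendsto
    have hcconst : ∀ m, c m = 2 := by
      intro m
      induction m with
      | zero => exact hc0
      | succ k ih =>
        have h1 := hbconst k
        rw [hb00] at h1
        simp only [hbdef] at h1
        linarith
    have : (2:ℝ) = 0 := by
      have h1 : Tendsto c atTop (nhds 2) := by
        have : c = fun _ => (2:ℝ) := funext fun m => hcconst m
        rw [this]
        exact tendsto_const_nhds
      exact tendsto_nhds_unique h1 hnull
    norm_num at this
  obtain ⟨m₀, hm₀⟩ := hdpos
  -- geometric summability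
  have hgeo : ∀ (x : ℕ → ℝ), (∀ n, 0 ≤ x n) → (∀ n, x n ≤ 2) →
      Summable (fun n => (x n : ℂ) * z^n) := by
    intro x h0 h2
    apply Summable.of_norm_bounded (g := fun n => 2 * ‖z‖^n)
      ((summable_geometric_of_lt_one (norm_nonneg z) hz1).mul_left 2)
    intro n
    rw [norm_mul, norm_pow, Complex.norm_real, Real.norm_eq_abs, _root_.abs_of_nonneg (h0 n)]
    exact mul_le_mul_of_nonneg_right (h2 n) (by positivity)
  have hb_le : ∀ n, b n ≤ 2 := by
    intro n
    have h1 := hnn (n+1)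
    simp only [hbdef]
    have := hc_le n
    linarith
  have hd_le : ∀ n, d n ≤ 2 := by
    intro n
    have h1 := hb_nonneg (n+1)
    simp only [hddef]
    have := hb_le n
    linarith
  have hgS := hgeo c hnn hc_le
  have hhS := hgeo b hb_nonneg hb_le
  have hkS := hgeo d hd_nonneg hd_le
  obtain ⟨g, hg⟩ := hgS
  obtain ⟨h, hh⟩ := hhS
  obtain ⟨k, hk⟩ := hkS
  -- shifts
  have hg2 : HasSum (fun n => (c (n+1):ℂ) * z^(n+1)) (g - 2) := by
    have e : g - 2 + ∑ i ∈ Finset.range 1, (c i:ℂ)*z^i = g := by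
      simp [hc0]
    have hg' := hg
    rw [← e] at hg'
    exact (hasSum_nat_add_iff 1).2 hg'
  have hh2 : HasSum (fun n => (b (n+1):ℂ) * z^(n+1)) (h - (b 0:ℝ)) := by
    have e : h - (b 0:ℝ) + ∑ i ∈ Finset.range 1, (b i:ℂ)*z^i = h := by
      simp
    have hh' := hh
    rw [← e] at hh'
    exact (hasSum_nat_add_iff 1).2 hh'
  have hg1 : HasSum (fun n => (c n:ℂ) * z^(n+1)) (z * g) := by
    have h1 := hg.mul_left z
    have e : (fun n => z * ((c n:ℂ) * z^n)) = fun n => (c n:ℂ) * z^(n+1) := by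
      funext n; ring
    rwa [e] at h1
  have hh1 : HasSum (fun n => (b n:ℂ) * z^(n+1)) (z * h) := by
    have h1 := hh.mul_left z
    have e : (fun n => z * ((b n:ℂ) * z^n)) = fun n => (b n:ℂ) * z^(n+1) := by
      funext n; ring
    rwa [e] at h1
  have hRel1 : z * h = z * g - (g - 2) := by
    have hsub := hg1.sub hg2
    have e : (fun n => (c n:ℂ) * z^(n+1) - (c (n+1):ℂ) * z^(n+1))
        = fun n => (b n:ℂ) * z^(n+1) := by
      funext n
      simp only [hbdef]
      push_cast
      ring
    rw [e] at hsub
    exact hh1.unique hsub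
  have hRel2 : z * k = z * h - (h - (b 0:ℝ)) := by
    have hk1 : HasSum (fun n => (d n:ℂ) * z^(n+1)) (z * k) := by
      have h1 := hk.mul_left z
      have e : (fun n => z * ((d n:ℂ) * z^n)) = fun n => (d n:ℂ) * z^(n+1) := by
        funext n; ring
      rwa [e] at h1
    have hsub := hh1.sub hh2
    have e : (fun n => (b n:ℂ) * z^(n+1) - (b (n+1):ℂ) * z^(n+1))
        = fun n => (d n:ℂ) * z^(n+1) := by
      funext n
      simp only [hddef]
      push_cast
      ring
    rw [e] at hsub
    exact hk1.unique hsub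
  have hzne : (1:ℂ) - z ≠ 0 := by
    intro hcontr
    have : z = 1 := by linear_combination -hcontr
    rw [this] at hz1
    norm_num at hz1
  have hzsq : ((1:ℂ)-z)^2 ≠ 0 := pow_ne_zero _ hzne
  have hgT : ((1:ℂ)-z)^2 * g = 2*(1-z) - (b 0:ℝ)*z + z^2 * k := by
    have e1 : ((1:ℂ)-z)*g = 2 - z*h := by linear_combination hRel1
    have e2 : ((1:ℂ)-z)*h = (b 0:ℝ) - z*k := by linear_combination hRel2
    linear_combination ((1:ℂ)-z)*e1 - z*e2
  -- sigma sum
  have hsig : HasSum (fun n => (d n:ℂ) * sg n z) g := by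
    have hA2C : HasSum (fun n : ℕ => (((n:ℝ)+1) * d n : ℝ)) 2 := hA2 ▸ hAhasSum
    have hAC : HasSum (fun n : ℕ => (((((n:ℝ)+1) * d n : ℝ)):ℂ)) ((2:ℝ):ℂ) :=
      hA2C.mapL Complex.ofRealCLM
    have hAC2 : HasSum (fun n : ℕ => (((((n:ℝ)+1) * d n : ℝ)):ℂ)) (2:ℂ) := by
      have := hAC
      rw [Complex.ofReal_ofNat] at this
      exact this
    have hdC : HasSum (fun n => ((d n:ℝ):ℂ)) ((b 0:ℝ):ℂ) :=
      hdsum.mapL Complex.ofRealCLM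
    have comp1 : HasSum (fun n : ℕ => (((((n:ℝ)+1) * d n : ℝ)):ℂ) * (1-z)) ((2:ℂ)*(1-z)) :=
      hAC2.mul_right (1-z)
    have comp2 : HasSum (fun n => ((d n:ℝ):ℂ) * z) (((b 0:ℝ):ℂ) * z) :=
      hdC.mul_right z
    have comp3 : HasSum (fun n => (d n:ℂ) * z^(n+2)) (z^2 * k) := by
      have h1 := hk.mul_left (z^2)
      have e : (fun n => z^2 * ((d n:ℂ) * z^n)) = fun n => (d n:ℂ) * z^(n+2) := by
        funext n; ring
      rwa [e] at h1
    have hTsum : HasSum (fun n => (d n:ℂ) * (((n:ℂ)+1)*(1-z) - z*(1 - z^(n+1))))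
        ((2:ℂ)*(1-z) - ((b 0:ℝ):ℂ) * z + z^2 * k) := by
      have h1 := (comp1.sub comp2).add comp3
      have e : (fun n : ℕ => ((((((n:ℝ)+1) * d n : ℝ)):ℂ) * (1-z) - ((d n:ℝ):ℂ) * z)
          + (d n:ℂ) * z^(n+2))
          = fun n => (d n:ℂ) * (((n:ℂ)+1)*(1-z) - z*(1 - z^(n+1))) := by
        funext n
        push_cast
        ring
      rwa [e] at h1
    have hdiv := hTsum.mul_left ((((1:ℂ)-z)^2)⁻¹)
    have e2 : (fun n => (((1:ℂ)-z)^2)⁻¹ * ((d n:ℂ) * (((n:ℂ)+1)*(1-z) - z*(1 - z^(n+1)))))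
        = fun n => (d n:ℂ) * sg n z := by
      funext n
      rw [← sg_eq n z]
      field_simp
    rw [e2] at hdiv
    have e3 : (((1:ℂ)-z)^2)⁻¹ * ((2:ℂ)*(1-z) - ((b 0:ℝ):ℂ) * z + z^2 * k) = g := by
      rw [← hgT]
      field_simp
    rwa [e3] at hdiv
  -- real parts
  have hre : HasSum (fun n => d n * (sg n z).re) g.re := by
    have h1 := Complex.hasSum_re hsig
    have e : (fun n => ((d n:ℂ) * sg n z).re) = fun n => d n * (sg n z).re := by
      funext n
      exact Complex.re_ofReal_mul _ _
    rwa [e] at h1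
  have hlow : HasSum (fun n => d n * (((n:ℝ)+1)/2)) 1 := by
    have hA2C : HasSum (fun n : ℕ => (((n:ℝ)+1) * d n : ℝ)) 2 := hA2 ▸ hAhasSum
    have h1 := hA2C.div_const 2
    have e : (fun n : ℕ => (((n:ℝ)+1) * d n)/2) = fun n => d n * (((n:ℝ)+1)/2) := by
      funext n; ring
    rw [e] at h1
    norm_num at h1
    exact h1
  have hlt : (1:ℝ) < g.re := by
    have h1 : ∀ n, d n * (((n:ℝ)+1)/2) ≤ d n * (sg n z).re :=
      fun n => mul_le_mul_of_nonneg_left (le_of_lt (sg_lower n hz1)) (hd_nonneg n)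
    have h2 : d m₀ * (((m₀:ℝ)+1)/2) < d m₀ * (sg m₀ z).re :=
      (mul_lt_mul_iff_right₀ hm₀).2 (sg_lower m₀ hz1)
    have h3 := Summable.tsum_lt_tsum h1 h2 hlow.summable hre.summable
    rwa [hlow.tsum_eq, hre.tsum_eq] at h3
  -- derivative of F
  set r := (1 + ‖z‖)/2 with hrdef
  have hr0 : 0 < r := by positivity
  have hzr : ‖z‖ < r := by rw [hrdef]; linarith
  have hr1 : r < 1 := by rw [hrdef]; linarith
  have hder : ∀ n:ℕ, ∀ y ∈ ball (0:ℂ) r,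
      HasDerivAt (fun y => ((c (n+1):ℂ)/((n:ℂ)+2)) * y^(n+2)) ((c (n+1):ℂ) * y^(n+1)) y := by
    intro n y _
    have hne : ((n:ℂ)+2) ≠ 0 := by
      have : ((n:ℂ)+2) = ((n+2:ℕ):ℂ) := by push_cast; ring
      rw [this]
      exact Nat.cast_ne_zero.2 (by omega)
    have hp : HasDerivAt (fun y => ((c (n+1):ℂ)/((n:ℂ)+2)) * y^(n+2))
        (((c (n+1):ℂ)/((n:ℂ)+2)) * (((n+2:ℕ):ℂ) * y^(n+2-1))) y :=
      (hasDerivAt_pow (n+2) y).const_mul ((c (n+1):ℂ)/((n:ℂ)+2))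
    convert hp using 1
    push_cast
    field_simp
  have hbnd : ∀ n:ℕ, ∀ y ∈ ball (0:ℂ) r, ‖(c (n+1):ℂ) * y^(n+1)‖ ≤ 2 * r^(n+1) := by
    intro n y hy
    rw [norm_mul, norm_pow, Complex.norm_real, Real.norm_eq_abs, _root_.abs_of_nonneg (hnn (n+1))]
    have hy1 : ‖y‖ ≤ r := le_of_lt (mem_ball_zero_iff.1 hy)
    have h1 : ‖y‖^(n+1) ≤ r^(n+1) := pow_le_pow_left₀ (norm_nonneg y) hy1 (n+1)
    have h2 := hc_le (n+1)
    have h3 := hnn (n+1)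
    nlinarith [pow_nonneg (norm_nonneg y) (n+1)]
  have hu : Summable (fun n : ℕ => 2 * r^(n+1)) := by
    have h1 := (summable_geometric_of_lt_one hr0.le hr1).mul_left (2*r)
    apply h1.congr
    intro n
    rw [pow_succ]
    ring
  have h0mem : (0:ℂ) ∈ ball (0:ℂ) r := by simpa using hr0
  have hzmem : z ∈ ball (0:ℂ) r := mem_ball_zero_iff.2 hzr
  have hsum0 : Summable (fun n : ℕ => ((c (n+1):ℂ)/((n:ℂ)+2)) * (0:ℂ)^(n+2)) := by
    apply summable_zero.congr
    intro n
    simp [zero_pow]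
  have hderiv := hasDerivAt_tsum_of_isPreconnected hu isOpen_ball
    (convex_ball (0:ℂ) r).isPreconnected hder hbnd h0mem hsum0 hzmem
  have hΦ : HasDerivAt (fun y => y + ∑' n, ((c (n+1):ℂ)/((n:ℂ)+2)) * y^(n+2))
      (1 + ∑' n, (c (n+1):ℂ) * z^(n+1)) z := by
    exact (hasDerivAt_id z).add hderiv
  have hFeq : F =ᶠ[nhds z] (fun y => y + ∑' n, ((c (n+1):ℂ)/((n:ℂ)+2)) * y^(n+2)) := by
    filter_upwards [isOpen_ball.mem_nhds hz] with y hy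
    have := (hF y hy).tsum_eq
    rw [this]
    ring
  have hderivF : deriv F z = 1 + ∑' n, (c (n+1):ℂ) * z^(n+1) := by
    rw [hFeq.deriv_eq]
    exact hΦ.deriv
  have htsum : ∑' n, (c (n+1):ℂ) * z^(n+1) = g - 2 := hg2.tsum_eq
  rw [hderivF, htsum]
  have : (1 + (g - 2)).re = g.re - 1 := by
    rw [show ((1:ℂ) + (g-2)) = g - 1 by ring]
    simp [Complex.sub_re, Complex.one_re]
  rw [this]
  linarith
end

section
/- Let {c_n}_{n≥0} be a convex null sequence with c_0 = 2 and define F(z) = z + Σ_{n≥2} (1/n)(1 + Σ_{j=1}^{n-1} c_j) z^n. Then Re((1 - z) F'(z)) > 0 for all z in the unit disk. -/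
open Complex Metric Filter Finset

/-- The Fejér-type polynomial. -/
noncomputable def fejG (k : ℕ) (z : ℂ) : ℂ :=
  ((k : ℂ) + 1) / 2 + ∑ n ∈ Finset.Icc 1 k, ((k + 1 - n : ℕ) : ℂ) * z ^ n

lemma fejG_succ (k : ℕ) (z : ℂ) :
    fejG (k + 1) z = fejG k z + (1 / 2 + ∑ n ∈ Finset.Icc 1 (k + 1), z ^ n) := by
  unfold fejG
  have h1 : ∑ n ∈ Finset.Icc 1 (k + 1), ((k + 1 + 1 - n : ℕ) : ℂ) * z ^ n
      = ∑ n ∈ Finset.Icc 1 (k + 1), (((k + 1 - n : ℕ) : ℂ) * z ^ n + z ^ n) := by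
    apply Finset.sum_congr rfl
    intro n hn
    rw [Finset.mem_Icc] at hn
    have : (k + 1 + 1 - n : ℕ) = (k + 1 - n) + 1 := by omega
    rw [this]
    push_cast
    ring
  rw [h1, Finset.sum_add_distrib]
  have h2 : ∑ n ∈ Finset.Icc 1 (k + 1), ((k + 1 - n : ℕ) : ℂ) * z ^ n
      = ∑ n ∈ Finset.Icc 1 k, ((k + 1 - n : ℕ) : ℂ) * z ^ n := by
    rw [Finset.sum_Icc_succ_top (by omega)]
    simp
  rw [h2]
  push_cast
  ring

lemma fejG_identity (k : ℕ) (z : ℂ) (hz : z ≠ 0) :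
    (∑ n ∈ Finset.range (k + 1), z ^ n) * (∑ n ∈ Finset.range (k + 1), (z⁻¹) ^ n)
      = fejG k z + fejG k z⁻¹ := by
  induction k with
  | zero => simp [fejG]; norm_num
  | succ k ih =>
    have hzi : z⁻¹ ≠ 0 := inv_ne_zero hz
    rw [Finset.sum_range_succ, Finset.sum_range_succ (f := fun n => (z⁻¹) ^ n)]
    have e1 : z ^ (k + 1) * ∑ n ∈ Finset.range (k + 1), (z⁻¹) ^ n
        = ∑ n ∈ Finset.Icc 1 (k + 1), z ^ n := by
      rw [Finset.mul_sum]
      have : ∀ n ∈ Finset.range (k + 1), z ^ (k + 1) * (z⁻¹) ^ n = z ^ (k + 1 - n) := by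
        intro n hn
        rw [Finset.mem_range] at hn
        have : z ^ (k + 1) = z ^ (k + 1 - n) * z ^ n := by
          rw [← pow_add]; congr 1; omega
        rw [this, mul_assoc, ← mul_pow, mul_inv_cancel₀ hz, one_pow, mul_one]
      rw [Finset.sum_congr rfl this]
      refine Finset.sum_nbij' (fun x => k + 1 - x) (fun n => k + 1 - n)
        (fun a ha => ?_) (fun a ha => ?_) (fun a ha => ?_) (fun a ha => ?_) (fun a ha => ?_) <;>
        simp only [Finset.mem_range, Finset.mem_Icc] at ha ⊢
      · omega
      · omega
      · omega
      · omega
    have e2 : (z⁻¹) ^ (k + 1) * ∑ n ∈ Finset.range (k + 1), z ^ n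
        = ∑ n ∈ Finset.Icc 1 (k + 1), (z⁻¹) ^ n := by
      rw [Finset.mul_sum]
      have : ∀ n ∈ Finset.range (k + 1), (z⁻¹) ^ (k + 1) * z ^ n = (z⁻¹) ^ (k + 1 - n) := by
        intro n hn
        rw [Finset.mem_range] at hn
        have h : (z⁻¹) ^ (k + 1) = (z⁻¹) ^ (k + 1 - n) * (z⁻¹) ^ n := by
          rw [← pow_add]; congr 1; omega
        rw [h, mul_assoc, ← mul_pow, inv_mul_cancel₀ hz, one_pow, mul_one]
      rw [Finset.sum_congr rfl this]
      refine Finset.sum_nbij' (fun x => k + 1 - x) (fun n => k + 1 - n)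
        (fun a ha => ?_) (fun a ha => ?_) (fun a ha => ?_) (fun a ha => ?_) (fun a ha => ?_) <;>
        simp only [Finset.mem_range, Finset.mem_Icc] at ha ⊢
      · omega
      · omega
      · omega
      · omega
    have e3 : z ^ (k + 1) * (z⁻¹) ^ (k + 1) = 1 := by
      rw [← mul_pow, mul_inv_cancel₀ hz, one_pow]
    rw [fejG_succ k z, fejG_succ k z⁻¹]
    linear_combination ih + e1 + e2 + e3

lemma fejG_conj (k : ℕ) (z : ℂ) :
    (starRingEnd ℂ) (fejG k z) = fejG k ((starRingEnd ℂ) z) := by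
  unfold fejG
  rw [map_add, map_div₀, map_add, map_sum]
  simp only [map_mul, map_pow, Complex.conj_natCast, map_one, map_ofNat]

lemma fejG_re_nonneg_sphere (k : ℕ) (z : ℂ) (hz : ‖z‖ = 1) : 0 ≤ (fejG k z).re := by
  have hz0 : z ≠ 0 := fun h => by simp [h] at hz
  have hmul : z * (starRingEnd ℂ) z = 1 := by
    rw [Complex.mul_conj]
    norm_cast
    rw [Complex.normSq_eq_norm_sq, hz]
    norm_num
  have hconj : (starRingEnd ℂ) z = z⁻¹ := (inv_eq_of_mul_eq_one_right hmul).symm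
  set S := ∑ n ∈ Finset.range (k + 1), z ^ n with hSdef
  have hS : (starRingEnd ℂ) S = ∑ n ∈ Finset.range (k + 1), (z⁻¹) ^ n := by
    rw [hSdef, map_sum]
    simp only [map_pow, hconj]
  have key : ((Complex.normSq S : ℝ) : ℂ) = ((2 * (fejG k z).re : ℝ) : ℂ) := by
    rw [← Complex.mul_conj S, hS, fejG_identity k z hz0, ← hconj, ← fejG_conj,
      Complex.add_conj]
  have : Complex.normSq S = 2 * (fejG k z).re := by exact_mod_cast key
  nlinarith [Complex.normSq_nonneg S]

lemma fejG_differentiable (k : ℕ) : Differentiable ℂ (fejG k) := by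
  unfold fejG
  apply Differentiable.add
  · exact differentiable_const _
  · apply Differentiable.fun_sum
    intro n _
    exact (differentiable_pow n).const_mul _

lemma fejG_zero_val (k : ℕ) : fejG k 0 = ((k : ℂ) + 1) / 2 := by
  unfold fejG
  rw [Finset.sum_eq_zero, add_zero]
  intro n hn
  rw [Finset.mem_Icc] at hn
  rw [zero_pow (by omega), mul_zero]

lemma fejG_re_pos (k : ℕ) {z : ℂ} (hz : z ∈ ball (0 : ℂ) 1) : 0 < (fejG k z).re := by
  set g : ℂ → ℂ := fun w => Complex.exp (-(fejG k w)) with hgdef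
  have hgd : Differentiable ℂ g := Complex.differentiable_exp.comp (fejG_differentiable k).neg
  have hgnorm : ∀ w : ℂ, ‖g w‖ = Real.exp (-(fejG k w).re) := by
    intro w
    rw [hgdef]
    simp [Complex.norm_exp]
  have hfront : ∀ w ∈ frontier (ball (0 : ℂ) 1), ‖g w‖ ≤ 1 := by
    intro w hw
    rw [frontier_ball (0 : ℂ) one_ne_zero, mem_sphere_zero_iff_norm] at hw
    rw [hgnorm]
    calc Real.exp (-(fejG k w).re) ≤ Real.exp 0 := by
          apply Real.exp_le_exp.mpr
          simpa using fejG_re_nonneg_sphere k w hw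
      _ = 1 := Real.exp_zero
  have hclos : ∀ w ∈ closure (ball (0 : ℂ) 1), ‖g w‖ ≤ 1 := by
    intro w hw
    exact Complex.norm_le_of_forall_mem_frontier_norm_le isBounded_ball
      hgd.diffContOnCl hfront hw
  have hnonneg : 0 ≤ (fejG k z).re := by
    have := hclos z (subset_closure hz)
    rw [hgnorm] at this
    by_contra h
    push_neg at h
    have : (1 : ℝ) < Real.exp (-(fejG k z).re) := by
      rw [show (1 : ℝ) = Real.exp 0 from Real.exp_zero.symm]
      exact Real.exp_lt_exp.mpr (by linarith)
    linarith
  rcases hnonneg.lt_or_eq with h | h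
  · exact h
  · exfalso
    have hmax : IsMaxOn (norm ∘ g) (ball (0 : ℂ) 1) z := by
      intro w hw
      simp only [Function.comp_apply, Set.mem_setOf_eq]
      rw [hgnorm z, ← h, neg_zero, Real.exp_zero]
      exact hclos w (subset_closure hw)
    have heq := Complex.eqOn_of_isPreconnected_of_isMaxOn_norm
      (convex_ball (0 : ℂ) 1).isPreconnected isOpen_ball hgd.differentiableOn hz hmax
    have h0 : g 0 = g z := heq (mem_ball_self one_pos)
    have hn0 : ‖g 0‖ = ‖g z‖ := by rw [h0]
    rw [hgnorm, hgnorm, fejG_zero_val, ← h, neg_zero, Real.exp_zero] at hn0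
    rw [show (1 : ℝ) = Real.exp 0 from Real.exp_zero.symm] at hn0
    have : -((((k : ℂ) + 1) / 2).re) = 0 := Real.exp_eq_exp.mp hn0
    have hre : (((k : ℂ) + 1) / 2).re = (k + 1 : ℝ) / 2 := by
      push_cast
      simp [Complex.div_re]
    rw [hre] at this
    have hk : (0 : ℝ) ≤ (k : ℝ) := Nat.cast_nonneg k
    linarith

lemma conv_aux {c : ℕ → ℝ}
    (hnull : Tendsto c atTop (nhds 0))
    (hconv : ∀ n, c (n + 1) - c (n + 2) ≤ c n - c (n + 1) ∧ 0 ≤ c (n + 1) - c (n + 2)) :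
    ∀ n, HasSum (fun k => ((k + 1 - n : ℕ) : ℝ) * (c k - 2 * c (k + 1) + c (k + 2))) (c n) := by
  set d : ℕ → ℝ := fun k => c k - c (k + 1) with hd_def
  set e : ℕ → ℝ := fun k => d k - d (k + 1) with he_def
  have hdm : ∀ k, d (k + 1) ≤ d k := fun k => (hconv k).1
  have hd : ∀ k, 0 ≤ d k := by
    intro k
    cases k with
    | zero => exact le_trans (hconv 0).2 (hconv 0).1
    | succ m => exact (hconv m).2
  have hdanti : Antitone d := antitone_nat_of_succ_le hdm
  have he : ∀ k, 0 ≤ e k := fun k => sub_nonneg.mpr (hdm k)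
  have hfe : ∀ k : ℕ, c k - 2 * c (k + 1) + c (k + 2) = e k := by
    intro k; simp only [he_def, hd_def]; ring
  have hd0 : Tendsto d atTop (nhds 0) := by
    have h1 : Tendsto (fun k => c (k + 1)) atTop (nhds 0) :=
      hnull.comp (tendsto_add_atTop_nat 1)
    simpa using hnull.sub h1
  -- N * d N → 0
  have hN : Tendsto (fun N : ℕ => (N : ℝ) * d N) atTop (nhds 0) := by
    have hub : ∀ N : ℕ, (N : ℝ) * d N ≤ 2 * (c (N / 2) - c N) + d N := by
      intro N
      have hsub : ∀ m, m ≤ N → ∑ k ∈ Finset.Ico m N, d k = c m - c N := by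
        intro m hm
        rw [Finset.sum_Ico_eq_sub _ hm]
        have h1 : ∀ M : ℕ, ∑ k ∈ Finset.range M, d k = c 0 - c M := by
          intro M
          simpa [hd_def] using Finset.sum_range_sub' c M
        rw [h1, h1]; ring
      have hcard : ((N - N / 2 : ℕ) : ℝ) * d N ≤ c (N / 2) - c N := by
        rw [← hsub (N / 2) (Nat.div_le_self N 2)]
        have := Finset.card_nsmul_le_sum (Finset.Ico (N / 2) N) d (d N)
          (fun x hx => hdanti (Finset.mem_Ico.mp hx).2.le)
        rwa [Nat.card_Ico, nsmul_eq_mul] at this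
      have hle : (N : ℝ) ≤ 2 * ((N - N / 2 : ℕ) : ℝ) + 1 := by
        have : N ≤ 2 * (N - N / 2) + 1 := by omega
        exact_mod_cast this
      calc (N : ℝ) * d N ≤ (2 * ((N - N / 2 : ℕ) : ℝ) + 1) * d N :=
            mul_le_mul_of_nonneg_right hle (hd N)
        _ = 2 * (((N - N / 2 : ℕ) : ℝ) * d N) + d N := by ring
        _ ≤ 2 * (c (N / 2) - c N) + d N := by linarith [hcard]
    have hlim : Tendsto (fun N : ℕ => 2 * (c (N / 2) - c N) + d N) atTop (nhds 0) := by
      have h2 : Tendsto (fun N : ℕ => c (N / 2)) atTop (nhds 0) := by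
        apply hnull.comp
        exact tendsto_atTop_atTop.mpr fun b => ⟨2 * b + 2, fun a ha => by omega⟩
      have := ((h2.sub hnull).const_mul 2).add hd0
      simpa using this
    exact squeeze_zero (fun N => mul_nonneg (Nat.cast_nonneg N) (hd N)) hub hlim
  intro n
  have key : HasSum (fun k => ((k + 1 - n : ℕ) : ℝ) * e k) (c n) := by
    rw [hasSum_iff_tendsto_nat_of_nonneg
      (fun k => mul_nonneg (Nat.cast_nonneg _) (he k))]
    have hPS : ∀ m : ℕ, ∑ k ∈ Finset.range (n + m), ((k + 1 - n : ℕ) : ℝ) * e k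
        = c n - c (n + m) - (m : ℝ) * d (n + m) := by
      intro m
      induction m with
      | zero =>
        rw [Finset.sum_eq_zero]
        · simp
        · intro k hk
          rw [Finset.mem_range] at hk
          rw [show (k + 1 - n : ℕ) = 0 by omega]
          simp
      | succ m ih =>
        rw [show n + (m + 1) = (n + m) + 1 by ring, Finset.sum_range_succ, ih,
          show (n + m + 1 - n : ℕ) = m + 1 by omega]
        simp only [he_def, hd_def]
        push_cast
        ring
    have hT : Tendsto (fun m : ℕ => c n - c (n + m) - (m : ℝ) * d (n + m)) atTop
        (nhds (c n)) := by
      have h1 : Tendsto (fun m : ℕ => c (n + m)) atTop (nhds 0) :=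
        hnull.comp (tendsto_atTop_atTop.mpr fun b => ⟨b, fun a ha => by omega⟩)
      have h2 : Tendsto (fun m : ℕ => (m : ℝ) * d (n + m)) atTop (nhds 0) := by
        have h3 : Tendsto (fun m : ℕ => ((n + m : ℕ) : ℝ) * d (n + m)) atTop (nhds 0) :=
          hN.comp (tendsto_atTop_atTop.mpr fun b => ⟨b, fun a ha => by omega⟩)
        apply squeeze_zero (fun m => mul_nonneg (Nat.cast_nonneg _) (hd _))
          (fun m => ?_) h3
        apply mul_le_mul_of_nonneg_right _ (hd _)
        exact_mod_cast Nat.le_add_left m n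
      simpa [sub_sub] using (tendsto_const_nhds (x := c n)).sub (h1.add h2)
    have hshift : Tendsto (fun m : ℕ => ∑ k ∈ Finset.range (m + n), ((k + 1 - n : ℕ) : ℝ) * e k)
        atTop (nhds (c n)) := by
      apply hT.congr
      intro m
      rw [Nat.add_comm m n, hPS m]
    exact (tendsto_add_atTop_iff_nat n).mp hshift
  have : (fun k : ℕ => ((k + 1 - n : ℕ) : ℝ) * (c k - 2 * c (k + 1) + c (k + 2)))
      = fun k => ((k + 1 - n : ℕ) : ℝ) * e k := funext fun k => by rw [hfe]
  rw [this]
  exact key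

set_option maxHeartbeats 1000000 in
/-- If `{c_n}` is a convex null sequence with `c₀ = 2` and
`F(z) = z + ∑_{n≥2} (1/n)(1 + ∑_{j=1}^{n-1} c_j) z^n`, then `Re((1-z) F'(z)) > 0` on the disk. -/
theorem stmt_5 (c : ℕ → ℝ) (F : ℂ → ℂ)
    (hnn : ∀ n, 0 ≤ c n)
    (hnull : Tendsto c atTop (nhds 0))
    (hconv : ∀ n, c (n + 1) - c (n + 2) ≤ c n - c (n + 1) ∧ 0 ≤ c (n + 1) - c (n + 2))
    (hc0 : c 0 = 2)
    (hF : ∀ z ∈ ball (0 : ℂ) 1,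
      HasSum (fun n : ℕ =>
        ((1 + (∑ j ∈ Finset.Icc 1 (n + 1), (c j : ℂ))) / ((n : ℂ) + 2)) * z ^ (n + 2))
        (F z - z)) :
    ∀ z ∈ ball (0 : ℂ) 1, 0 < ((1 - z) * deriv F z).re := by
  -- basic facts about c
  have hd : ∀ k, 0 ≤ c k - c (k + 1) := by
    intro k
    cases k with
    | zero => exact le_trans (hconv 0).2 (hconv 0).1
    | succ m => exact (hconv m).2
  have hmono : Antitone c := antitone_nat_of_succ_le (fun k => by linarith [hd k])
  have hc2 : ∀ j, c j ≤ 2 := fun j => hc0 ▸ hmono (Nat.zero_le j)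
  -- coefficient sequences
  set a : ℕ → ℂ := fun n =>
    (1 + (∑ j ∈ Finset.Icc 1 (n + 1), (c j : ℂ))) / ((n : ℂ) + 2) with ha_def
  set b : ℕ → ℂ := fun n => 1 + (∑ j ∈ Finset.Icc 1 (n + 1), (c j : ℂ)) with hb_def
  have hn2 : ∀ n : ℕ, ((n : ℂ) + 2) ≠ 0 := by
    intro n h
    have := congrArg Complex.re h
    simp [Complex.add_re] at this
    have : (0:ℝ) ≤ (n:ℝ) := Nat.cast_nonneg n
    linarith
  have hab : ∀ n : ℕ, ((n : ℂ) + 2) * a n = b n := by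
    intro n
    rw [ha_def]
    exact mul_div_cancel₀ _ (hn2 n)
  have hbr : ∀ n, b n = ((1 + ∑ j ∈ Finset.Icc 1 (n + 1), c j : ℝ) : ℂ) := by
    intro n
    rw [hb_def]
    push_cast
    ring
  have hbnorm : ∀ n, ‖b n‖ ≤ 2 * (n : ℝ) + 3 := by
    intro n
    rw [hbr n, Complex.norm_real, Real.norm_eq_abs, _root_.abs_of_nonneg]
    · have hcard := Finset.sum_le_card_nsmul (Finset.Icc 1 (n + 1)) c 2 (fun j _ => hc2 j)
      rw [Nat.card_Icc, nsmul_eq_mul] at hcard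
      have hcc : (n + 1 + 1 - 1 : ℕ) = n + 1 := by omega
      rw [hcc] at hcard
      push_cast at hcard ⊢
      linarith
    · have : 0 ≤ ∑ j ∈ Finset.Icc 1 (n + 1), c j :=
        Finset.sum_nonneg fun j _ => hnn j
      linarith
  -- the e sequence and its summation facts
  set e : ℕ → ℝ := fun k => c k - 2 * c (k + 1) + c (k + 2) with he_def
  have he : ∀ k, 0 ≤ e k := by
    intro k
    have := (hconv k).1
    simp only [he_def]
    linarith
  have hL1 := conv_aux hnull hconv
  have hE2 : HasSum (fun k => ((k + 1 : ℕ) : ℝ) * e k) 2 := by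
    have h := hL1 0
    rw [hc0] at h
    have heq : (fun k : ℕ => ((k + 1 - 0 : ℕ) : ℝ) * e k)
        = fun k : ℕ => ((k + 1 : ℕ) : ℝ) * e k := by
      funext k; norm_num
    rwa [heq] at h
  have hK : ∃ K, 0 < e K := by
    by_contra h
    push_neg at h
    have hz : ∀ k, ((k + 1 : ℕ) : ℝ) * e k = 0 := by
      intro k
      have : e k = 0 := le_antisymm (h k) (he k)
      rw [this, mul_zero]
    have h20 : (2 : ℝ) = 0 := hE2.unique (by rw [funext hz]; exact hasSum_zero)
    norm_num at h20
  intro z hz1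
  have hzn : ‖z‖ < 1 := mem_ball_zero_iff.mp hz1
  -- Step 1: compute the derivative of F
  set r : ℝ := (‖z‖ + 1) / 2 with hr_def
  have hr0 : 0 ≤ r := by positivity
  have hrpos : 0 < r := by positivity
  have hr1 : r < 1 := by rw [hr_def]; linarith
  have hzr : ‖z‖ < r := by rw [hr_def]; linarith [norm_nonneg z]
  set g : ℕ → ℂ → ℂ := fun n w => a n * w ^ (n + 2) with hg_def
  set g' : ℕ → ℂ → ℂ := fun n w => b n * w ^ (n + 1) with hg'_def
  set u : ℕ → ℝ := fun n => (2 * ((n : ℝ) * r ^ n) + 3 * r ^ n) * r with hu_def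
  have hu : Summable u := by
    have s1 : Summable (fun n : ℕ => (n : ℝ) * r ^ n) := by
      have := summable_pow_mul_geometric_of_norm_lt_one 1
        (r := r) (by rwa [Real.norm_eq_abs, _root_.abs_of_nonneg hr0])
      simpa using this
    have s2 : Summable (fun n : ℕ => r ^ n) := summable_geometric_of_lt_one hr0 hr1
    exact (((s1.mul_left 2).add (s2.mul_left 3)).mul_right r)
  have hgderiv : ∀ n : ℕ, ∀ w : ℂ, HasDerivAt (g n) (g' n w) w := by
    intro n w
    have h1 : HasDerivAt (fun w : ℂ => w ^ (n + 2)) (((n + 2 : ℕ) : ℂ) * w ^ (n + 1)) w :=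
      hasDerivAt_pow (n + 2) w
    have h2 := h1.const_mul (a n)
    convert h2 using 1
    show b n * w ^ (n + 1) = _
    rw [← hab n]
    push_cast
    ring
    all_goals rfl
  have hg'bound : ∀ n : ℕ, ∀ w ∈ ball (0 : ℂ) r, ‖g' n w‖ ≤ u n := by
    intro n w hw
    rw [mem_ball_zero_iff] at hw
    simp only [hg'_def]
    rw [norm_mul, norm_pow]
    calc ‖b n‖ * ‖w‖ ^ (n + 1) ≤ (2 * (n : ℝ) + 3) * r ^ (n + 1) := by
          apply mul_le_mul (hbnorm n) (pow_le_pow_left₀ (norm_nonneg w) hw.le _)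
            (by positivity) (by positivity)
      _ = u n := by rw [hu_def]; ring
  have hg0 : Summable (fun n => g n 0) := by
    have : (fun n => g n 0) = fun _ => (0 : ℂ) := by
      funext n
      simp [hg_def]
    rw [this]
    exact summable_zero
  have hzt : z ∈ ball (0 : ℂ) r := mem_ball_zero_iff.mpr hzr
  have htsum : HasDerivAt (fun w => ∑' n, g n w) (∑' n, g' n z) z :=
    hasDerivAt_tsum_of_isPreconnected hu isOpen_ball (convex_ball (0:ℂ) r).isPreconnected
      (fun n y _ => hgderiv n y) (fun n y hy => hg'bound n y hy)
      (mem_ball_self hrpos) hg0 hzt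
  set D : ℂ := ∑' n, g' n z with hD_def
  have hderiv : deriv F z = 1 + D := by
    have hEq : F =ᶠ[nhds z] fun w => w + ∑' n, g n w := by
      filter_upwards [isOpen_ball.mem_nhds hz1] with w hw
      have htseq := (hF w hw).tsum_eq
      simp only [hg_def, ha_def]
      rw [htseq]
      ring
    rw [hEq.deriv_eq]
    exact ((hasDerivAt_id z).add htsum).deriv
  have hsum' : Summable (fun n => g' n z) :=
    Summable.of_norm_bounded hu (fun n => hg'bound n z hzt)
  have hD : HasSum (fun n => b n * z ^ (n + 1)) D := by
    have := hsum'.hasSum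
    rw [← hD_def] at this
    exact this
  have h2 : HasSum (fun n => b n * z ^ (n + 2)) (z * D) := by
    have h := hD.mul_left z
    have heq : (fun n => z * (b n * z ^ (n + 1))) = fun n => b n * z ^ (n + 2) :=
      funext fun n => by ring
    rwa [heq] at h
  set v : ℕ → ℂ := fun n => if n = 0 then z else b (n - 1) * z ^ (n + 1) with hv_def
  have hv : HasSum v (z * D + z) := by
    have hshift : HasSum (fun n => v (n + 1)) (z * D) := by
      have heq : (fun n : ℕ => v (n + 1)) = fun n => b n * z ^ (n + 2) := by
        funext n
        simp [hv_def]
      rwa [heq]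
    have := (hasSum_nat_add_iff 1).mp hshift
    simpa [hv_def] using this
  have h4 : HasSum (fun n => b n * z ^ (n + 1) - v n) (D - (z * D + z)) := hD.sub hv
  have hterm : ∀ n : ℕ, b n * z ^ (n + 1) - v n = (c (n + 1) : ℂ) * z ^ (n + 1) := by
    intro n
    cases n with
    | zero =>
      simp only [hv_def, hb_def, if_pos rfl, Finset.Icc_self, Finset.sum_singleton]
      ring
    | succ m =>
      simp only [hv_def, hb_def, Nat.succ_ne_zero, if_false, Nat.add_sub_cancel]
      rw [Finset.sum_Icc_succ_top (by omega : 1 ≤ m + 1 + 1)]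
      push_cast
      ring
  have hKey : HasSum (fun n => (c (n + 1) : ℂ) * z ^ (n + 1)) (D - (z * D + z)) := by
    have heq : (fun n => b n * z ^ (n + 1) - v n)
        = fun n => (c (n + 1) : ℂ) * z ^ (n + 1) := funext hterm
    rwa [heq] at h4
  set v2 : ℕ → ℂ := fun n => if n = 0 then 1 else (c n : ℂ) * z ^ n with hv2_def
  set W : ℂ := (1 - z) * deriv F z with hW_def
  have hW : HasSum v2 W := by
    have hshift : HasSum (fun n => v2 (n + 1)) (D - (z * D + z)) := by
      have heq : (fun n : ℕ => v2 (n + 1)) = fun n => (c (n + 1) : ℂ) * z ^ (n + 1) := by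
        funext n
        simp [hv2_def]
      rwa [heq]
    have h := (hasSum_nat_add_iff 1).mp hshift
    have : D - (z * D + z) + ∑ i ∈ Finset.range 1, v2 i = W := by
      simp only [hW_def, hderiv, hv2_def, Finset.range_one, Finset.sum_singleton]
      norm_num
      ring
    rwa [this] at h
  -- Fubini setup
  set w2 : ℕ → ℕ → ℂ := fun k n =>
    if n = 0 then ((k : ℂ) + 1) / 2 else ((k + 1 - n : ℕ) : ℂ) * z ^ n with hw2_def
  set φ : ℕ × ℕ → ℂ := fun p => (e p.1 : ℂ) * w2 p.1 p.2 with hφ_def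
  set q : ℝ := max ‖z‖ (1 / 2) with hq_def
  have hq0 : 0 ≤ q := le_trans (by norm_num) (le_max_right _ _)
  have hq1 : q < 1 := max_lt hzn (by norm_num)
  have hzq : ‖z‖ ≤ q := le_max_left _ _
  have hφbound : ∀ p : ℕ × ℕ, ‖φ p‖ ≤ (((p.1 + 1 : ℕ) : ℝ) * e p.1) * q ^ p.2 := by
    intro ⟨k, n⟩
    simp only [hφ_def]
    rw [norm_mul, Complex.norm_real, Real.norm_eq_abs, _root_.abs_of_nonneg (he k)]
    have hw : ‖w2 k n‖ ≤ ((k + 1 : ℕ) : ℝ) * q ^ n := by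
      simp only [hw2_def]
      by_cases hn : n = 0
      · subst hn
        rw [if_pos rfl, pow_zero, mul_one]
        have hcst : ((k : ℂ) + 1) / 2 = ((((k : ℝ) + 1) / 2 : ℝ) : ℂ) := by push_cast; ring
        rw [hcst, Complex.norm_real, Real.norm_eq_abs, _root_.abs_of_nonneg (by positivity)]
        push_cast
        linarith [Nat.cast_nonneg (α := ℝ) k]
      · rw [if_neg hn, norm_mul, norm_pow, Complex.norm_natCast]
        apply mul_le_mul _ (pow_le_pow_left₀ (norm_nonneg z) hzq n) (by positivity)
          (Nat.cast_nonneg _)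
        exact_mod_cast Nat.sub_le (k + 1) n
    calc e k * ‖w2 k n‖ ≤ e k * (((k + 1 : ℕ) : ℝ) * q ^ n) :=
          mul_le_mul_of_nonneg_left hw (he k)
      _ = (((k + 1 : ℕ) : ℝ) * e k) * q ^ n := by ring
  have hφsummable : Summable φ := by
    apply Summable.of_norm_bounded _ hφbound
    have := Summable.mul_of_nonneg hE2.summable
      (summable_geometric_of_lt_one hq0 hq1)
      (fun k => mul_nonneg (Nat.cast_nonneg _) (he k))
      (fun n => pow_nonneg hq0 n)
    exact this
  set T : ℂ := ∑' p, φ p with hT_def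
  have hφT : HasSum φ T := hφsummable.hasSum
  -- fiberwise in k
  have hGk : ∀ k, HasSum (fun n => φ (k, n)) ((e k : ℂ) * fejG k z) := by
    intro k
    have hsupp : ∀ n ∉ Finset.range (k + 1), φ (k, n) = 0 := by
      intro n hn
      rw [Finset.mem_range, not_lt] at hn
      simp only [hφ_def, hw2_def]
      rw [if_neg (by omega), show (k + 1 - n : ℕ) = 0 by omega]
      simp
    have h := hasSum_sum_of_ne_finset_zero (L := SummationFilter.unconditional ℕ) hsupp
    have hval : ∑ n ∈ Finset.range (k + 1), φ (k, n) = (e k : ℂ) * fejG k z := by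
      have hmul : ∑ n ∈ Finset.range (k + 1), φ (k, n)
          = (e k : ℂ) * ∑ n ∈ Finset.range (k + 1), w2 k n := by
        simp only [hφ_def]
        rw [Finset.mul_sum]
      rw [hmul]
      congr 1
      rw [Finset.sum_range_succ']
      have h0 : w2 k 0 = ((k : ℂ) + 1) / 2 := by simp [hw2_def]
      have hstep : ∀ i, w2 k (i + 1) = ((k - i : ℕ) : ℂ) * z ^ (i + 1) := by
        intro i
        simp only [hw2_def, Nat.succ_ne_zero, if_false]
        congr 2
        omega
      rw [h0]
      unfold fejG
      rw [add_comm]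
      congr 1
      rw [Finset.sum_congr rfl (fun i _ => hstep i)]
      refine Finset.sum_nbij' (fun i => i + 1) (fun n => n - 1)
        (fun i hi => ?_) (fun n hn => ?_) (fun i hi => ?_) (fun n hn => ?_) (fun i hi => ?_) <;>
        simp only [Finset.mem_range, Finset.mem_Icc] at *
      · omega
      · omega
      · omega
      · omega
      · congr 2
        omega
    rwa [hval] at h
  have hA : HasSum (fun k => (e k : ℂ) * fejG k z) T := hφT.prod_fiberwise hGk
  have hswap : HasSum (fun p : ℕ × ℕ => φ (p.2, p.1)) T :=
    ((Equiv.prodComm ℕ ℕ).hasSum_iff).mpr hφT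
  have hVn : ∀ n, HasSum (fun k => φ (k, n)) (v2 n) := by
    intro n
    cases n with
    | zero =>
      have h2 : HasSum (fun k => ((((k + 1 : ℕ) : ℝ) * e k : ℝ) : ℂ)) ((2 : ℝ) : ℂ) :=
        Complex.hasSum_ofReal.mpr hE2
      have h3 := h2.div_const 2
      have heq : (fun k => ((((k + 1 : ℕ) : ℝ) * e k : ℝ) : ℂ) / 2) = fun k => φ (k, 0) := by
        funext k
        simp only [hφ_def, hw2_def, if_pos rfl]
        push_cast
        ring
      rw [heq] at h3
      have hv20 : ((2 : ℝ) : ℂ) / 2 = v2 0 := by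
        simp only [hv2_def, if_pos rfl]
        norm_num
      rwa [hv20] at h3
    | succ m =>
      have h2 := Complex.hasSum_ofReal.mpr (hL1 (m + 1))
      have h3 := h2.mul_right (z ^ (m + 1))
      have heq : (fun k : ℕ =>
          ((((k + 1 - (m + 1) : ℕ) : ℝ) * (c k - 2 * c (k + 1) + c (k + 2)) : ℝ) : ℂ)
            * z ^ (m + 1)) = fun k => φ (k, m + 1) := by
        funext k
        simp only [hφ_def, hw2_def, Nat.succ_ne_zero, if_false, he_def]
        push_cast
        ring
      rw [heq] at h3
      have hv2m : ((c (m + 1) : ℝ) : ℂ) * z ^ (m + 1) = v2 (m + 1) := by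
        simp [hv2_def]
      rwa [hv2m] at h3
  have hB : HasSum v2 T := hswap.prod_fiberwise hVn
  have hTW : T = W := hB.unique hW
  have hA' : HasSum (fun k => (e k : ℂ) * fejG k z) W := hTW ▸ hA
  have hRe : HasSum (fun k => ((e k : ℂ) * fejG k z).re) W.re := Complex.hasSum_re hA'
  have hre_eq : ∀ k, ((e k : ℂ) * fejG k z).re = e k * (fejG k z).re := by
    intro k
    rw [Complex.re_ofReal_mul]
  obtain ⟨K, hKpos⟩ := hK
  have hfej : ∀ k : ℕ, 0 < (fejG k z).re := fun k => fejG_re_pos k hz1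
  have hle : e K * (fejG K z).re ≤ W.re := by
    have hW2 := le_hasSum hRe K
      (fun j _ => by rw [hre_eq j]; exact mul_nonneg (he j) (hfej j).le)
    rwa [hre_eq K] at hW2
  calc (0 : ℝ) < e K * (fejG K z).re := mul_pos hKpos (hfej K)
    _ ≤ W.re := hle
end

section
/- For every z in the unit disk, the function f(z) = Re(z/(1-z)^2) + i·Im(z/(1-z)), written as f = u + iv, satisfies u > -v^2 - 1/4. That is, if u = Re(z/(1-z)^2) and v = Im(z/(1-z)) for |z| < 1, then u + v^2 + 1/4 > 0. -/
open Complex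

/-- For `|z| < 1`, with `u = Re(z/(1-z)²)` and `v = Im(z/(1-z))`, one has `u + v² + 1/4 > 0`. -/
theorem stmt_8 (z : ℂ) (hz : ‖z‖ < 1) :
    0 < (z / (1 - z) ^ 2).re + ((z / (1 - z)).im) ^ 2 + 1 / 4 := by
  have hz1 : (1 : ℂ) - z ≠ 0 := by
    intro h
    have : z = 1 := by linear_combination -h
    rw [this] at hz; norm_num at hz
  have hsq : Complex.normSq z < 1 := by
    have := Complex.sq_norm z
    have habs : ‖z‖ < 1 := hz
    nlinarith [norm_nonneg z, Complex.sq_norm z]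
  have hns : z.re ^ 2 + z.im ^ 2 < 1 := by
    have := hsq
    simp [Complex.normSq_apply] at this
    nlinarith [this]
  have hnspos : 0 < Complex.normSq (1 - z) := Complex.normSq_pos.mpr hz1
  have hnseq : Complex.normSq (1 - z) = (1 - z.re) ^ 2 + z.im ^ 2 := by
    simp [Complex.normSq_apply]
    ring
  -- Re(z/(1-z)) > -1/2
  have hd : 0 < (1 - z.re) ^ 2 + z.im ^ 2 := hnseq ▸ hnspos
  have hre : -(1/2 : ℝ) < (z / (1 - z)).re := by
    rw [Complex.div_re, hnseq]
    simp only [Complex.sub_re, Complex.sub_im, Complex.one_re, Complex.one_im]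
    rw [← add_div, lt_div_iff₀ hd]
    nlinarith
  have hw : z / (1 - z) ^ 2 = z / (1 - z) + (z / (1 - z)) ^ 2 := by
    field_simp
    ring
  rw [hw]
  set w := z / (1 - z) with hwdef
  have h2 : (w ^ 2).re = w.re ^ 2 - w.im ^ 2 := by
    rw [sq, Complex.mul_re]; ring
  rw [Complex.add_re, h2]
  nlinarith [sq_nonneg (w.re + 1/2)]
end

section
/- The analytic part h(z) = (1-(1-z)^2)/(2(1-z)^2) of the Bshouty–Lyzzaik example satisfies Re(1 + z h''(z)/h'(z)) > -1/2 for all z in the unit disk. -/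
open Complex Metric

/-- The analytic part `h(z) = (1-(1-z)²)/(2(1-z)²)` satisfies
`Re(1 + z h''(z)/h'(z)) > -1/2` on the unit disk. -/
theorem stmt_12 (h : ℂ → ℂ)
    (hh : ∀ z, h z = (1 - (1 - z) ^ 2) / (2 * (1 - z) ^ 2)) :
    ∀ z ∈ ball (0 : ℂ) 1,
      -(1 / 2) < (1 + z * deriv (deriv h) z / deriv h z).re := by
  -- derivative of the inner map 1 - z
  have hlin : ∀ w : ℂ, HasDerivAt (fun z : ℂ => 1 - z) (-1) w := fun w =>
    (hasDerivAt_id w).const_sub 1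
  -- first derivative of h away from 1
  have hd1 : ∀ w : ℂ, w ≠ 1 → deriv h w = ((1 - w) ^ 3)⁻¹ := by
    intro w hw
    have hne : (1 : ℂ) - w ≠ 0 := sub_ne_zero.mpr (Ne.symm hw)
    have hsq : HasDerivAt (fun z : ℂ => (1 - z) ^ 2) (2 * (1 - w) ^ 1 * (-1)) w :=
      (hlin w).pow 2
    have hu : HasDerivAt (fun z : ℂ => 1 - (1 - z) ^ 2) (-(2 * (1 - w) ^ 1 * (-1))) w :=
      hsq.const_sub 1
    have hv : HasDerivAt (fun z : ℂ => 2 * (1 - z) ^ 2) (2 * (2 * (1 - w) ^ 1 * (-1))) w :=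
      hsq.const_mul 2
    have hvne : 2 * (1 - w) ^ 2 ≠ 0 := by
      simp [pow_ne_zero, hne]
    have hdiv := hu.div hv hvne
    have heq : h = fun z => (1 - (1 - z) ^ 2) / (2 * (1 - z) ^ 2) := funext hh
    rw [heq]
    rw [show (fun z : ℂ => (1 - (1 - z) ^ 2) / (2 * (1 - z) ^ 2)) = (fun z : ℂ => 1 - (1 - z) ^ 2) / (fun z : ℂ => 2 * (1 - z) ^ 2) from rfl, hdiv.deriv]
    field_simp
    ring
  -- second derivative of h away from 1
  have hd2 : ∀ w : ℂ, w ≠ 1 → deriv (deriv h) w = 3 * ((1 - w) ^ 4)⁻¹ := by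
    intro w hw
    have hne : (1 : ℂ) - w ≠ 0 := sub_ne_zero.mpr (Ne.symm hw)
    have hev : deriv h =ᶠ[nhds w] fun z => ((1 - z) ^ 3)⁻¹ := by
      have hopen : IsOpen {z : ℂ | z ≠ 1} := isOpen_ne
      filter_upwards [hopen.mem_nhds hw] with z hz using hd1 z hz
    rw [Filter.EventuallyEq.deriv_eq hev]
    have hcube : HasDerivAt (fun z : ℂ => (1 - z) ^ 3) (3 * (1 - w) ^ 2 * (-1)) w :=
      (hlin w).pow 3
    have hinv := hcube.inv (pow_ne_zero 3 hne)
    rw [show (fun z : ℂ => ((1 - z) ^ 3)⁻¹) = (fun z : ℂ => (1 - z) ^ 3)⁻¹ from rfl, hinv.deriv]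
    field_simp
  intro z hz
  have hz1 : ‖z‖ < 1 := by
    simpa [Complex.dist_eq] using hz
  have hzn : z.re ^ 2 + z.im ^ 2 < 1 := by
    have h1 := Complex.sq_norm z
    rw [Complex.normSq_apply] at h1
    nlinarith [norm_nonneg z]
  have hzne : z ≠ 1 := by
    intro h'; rw [h'] at hz1; simp at hz1
  have hne : (1 : ℂ) - z ≠ 0 := sub_ne_zero.mpr (Ne.symm hzne)
  rw [hd1 z hzne, hd2 z hzne]
  have hsimp : 1 + z * (3 * ((1 - z) ^ 4)⁻¹) / ((1 - z) ^ 3)⁻¹ = (1 + 2 * z) / (1 - z) := by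
    field_simp
    ring
  have hD : 0 < Complex.normSq (1 - z) := Complex.normSq_pos.mpr hne
  rw [hsimp, Complex.div_re]
  rw [neg_lt, ← add_div, ← neg_div, div_lt_iff₀ hD, Complex.normSq_sub]
  simp only [Complex.normSq_one, Complex.add_re, Complex.one_re, Complex.mul_re,
    Complex.add_im, Complex.one_im, Complex.mul_im, Complex.sub_re, Complex.sub_im,
    Complex.normSq_apply, Complex.re_ofNat, Complex.im_ofNat, Complex.conj_re, Complex.conj_im, Complex.mul_re, Complex.one_im]
  nlinarith [hzn]
end

section
/- The coefficients a_n = 1/n^2 (n ≥ 2, with a_1 = 1) satisfy Σ_{n≥2} { n|(n+1)a_n - (n-1)a_{n-1}| + (n-1)|n a_n - (n-2)a_{n-1}| } ≤ 2. -/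
/-- The coefficients `a 1 = 1`, `a n = 1/n²` (`n ≥ 2`) satisfy
`∑_{n≥2} { n|(n+1)aₙ - (n-1)aₙ₋₁| + (n-1)|n aₙ - (n-2)aₙ₋₁| } ≤ 2`. -/
theorem stmt_16 (a : ℕ → ℝ) (ha1 : a 1 = 1)
    (ha : ∀ n : ℕ, 2 ≤ n → a n = 1 / (n : ℝ) ^ 2) :
    Summable (fun n : ℕ =>
      ((n : ℝ) + 2) * |((n : ℝ) + 3) * a (n + 2) - ((n : ℝ) + 1) * a (n + 1)|
        + ((n : ℝ) + 1) * |((n : ℝ) + 2) * a (n + 2) - (n : ℝ) * a (n + 1)|)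
    ∧ (∑' n : ℕ,
      (((n : ℝ) + 2) * |((n : ℝ) + 3) * a (n + 2) - ((n : ℝ) + 1) * a (n + 1)|
        + ((n : ℝ) + 1) * |((n : ℝ) + 2) * a (n + 2) - (n : ℝ) * a (n + 1)|)) ≤ 2 := by
  have hf : ∀ n : ℕ,
      (((n : ℝ) + 2) * |((n : ℝ) + 3) * a (n + 2) - ((n : ℝ) + 1) * a (n + 1)|
        + ((n : ℝ) + 1) * |((n : ℝ) + 2) * a (n + 2) - (n : ℝ) * a (n + 1)|)
      = 2 * (1 / ((n : ℝ) + 1) - 1 / ((n : ℝ) + 2)) := by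
    intro n
    match n with
    | 0 =>
      rw [show (0:ℕ)+2 = 2 from rfl, show (0:ℕ)+1 = 1 from rfl, ha 2 (by norm_num), ha1]
      norm_num
    | Nat.succ m =>
      have h1 : a (m + 1 + 2) = 1 / ((m : ℝ) + 3) ^ 2 := by
        rw [ha (m + 3) (by omega)]; push_cast; ring_nf
      have h2 : a (m + 1 + 1) = 1 / ((m : ℝ) + 2) ^ 2 := by
        rw [ha (m + 2) (by omega)]; push_cast; ring_nf
      rw [h1, h2]
      have hm2 : (0:ℝ) < (m : ℝ) + 2 := by positivity
      have hm3 : (0:ℝ) < (m : ℝ) + 3 := by positivity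
      push_cast
      have e1 : ((m:ℝ) + 1 + 3) * (1 / ((m:ℝ) + 3) ^ 2) - ((m:ℝ) + 1 + 1) * (1 / ((m:ℝ) + 2) ^ 2)
          = -(1 / (((m:ℝ)+3)^2 * ((m:ℝ)+2))) := by field_simp; ring
      have e2 : ((m:ℝ) + 1 + 2) * (1 / ((m:ℝ) + 3) ^ 2) - ((m:ℝ) + 1) * (1 / ((m:ℝ) + 2) ^ 2)
          = 1 / (((m:ℝ)+3) * ((m:ℝ)+2)^2) := by field_simp; ring
      rw [e1, e2, abs_neg, abs_of_nonneg (by positivity), abs_of_nonneg (by positivity)]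
      field_simp
      ring
  have hg : HasSum (fun n : ℕ => 1 / ((n : ℝ) + 1) - 1 / ((n : ℝ) + 2)) 1 := by
    have hnn : ∀ n : ℕ, 0 ≤ 1 / ((n : ℝ) + 1) - 1 / ((n : ℝ) + 2) := by
      intro n
      rw [sub_nonneg]
      gcongr
      linarith
    rw [hasSum_iff_tendsto_nat_of_nonneg hnn]
    have key : ∀ N : ℕ, ∑ i ∈ Finset.range N, (1 / ((i : ℝ) + 1) - 1 / ((i : ℝ) + 2))
        = 1 - 1 / ((N : ℝ) + 1) := by
      intro N
      have := Finset.sum_range_sub' (fun i : ℕ => 1 / ((i : ℝ) + 1)) N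
      rw [show (∑ i ∈ Finset.range N, (1 / ((i : ℝ) + 1) - 1 / ((i : ℝ) + 2)))
          = ∑ i ∈ Finset.range N, ((fun i : ℕ => 1 / ((i : ℝ) + 1)) i
            - (fun i : ℕ => 1 / ((i : ℝ) + 1)) (i + 1)) from by
          apply Finset.sum_congr rfl; intro i _; push_cast; ring_nf, this]
      norm_num
    simp only [key]
    have : Filter.Tendsto (fun N : ℕ => 1 - 1 / ((N : ℝ) + 1)) Filter.atTop (nhds (1 - 0)) :=
      Filter.Tendsto.const_sub 1 tendsto_one_div_add_atTop_nhds_zero_nat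
    simpa using this
  have hh : HasSum (fun n : ℕ =>
      ((n : ℝ) + 2) * |((n : ℝ) + 3) * a (n + 2) - ((n : ℝ) + 1) * a (n + 1)|
        + ((n : ℝ) + 1) * |((n : ℝ) + 2) * a (n + 2) - (n : ℝ) * a (n + 1)|) 2 := by
    have := hg.mul_left 2
    simpa [hf, mul_one] using this
  exact ⟨hh.summable, le_of_eq hh.tsum_eq⟩
end
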